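/- arXiv:math/0702412 — 5 statements merged into one kernel-verified Lean document; each statement's English description precedes it below -/
import Mathlib

section
/- Let P be a ϕ-irreducible Markov transition kernel on a measurable space (X, F) with stationary probability distribution π. Suppose there exists a small set C ∈ F, i.e., π(C) > 0 and there exist ε > 0 and a probability measure ν on (X, F) with P(x, A) ≥ ε ν(A) for all A ∈ F and all x ∈ C, such that P[X_n ∈ C infinitely often | X_0 = x] = 1 for all x ∈ X. Then the chain is Harris recurrent. -/
open MeasureTheory ProbabilityTheory Filter Set ENNReal

namespace MCMCHarris

variable {X : Type*} [MeasurableSpace X]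

/-- The `n`-step transition kernel `P^n`. -/
noncomputable def iterK (P : Kernel X X) : ℕ → Kernel X X
  | 0 => Kernel.id
  | n + 1 => (iterK P n).comp P

/-- `hitLE P A n x` is the probability `P[τ_A ≤ n | X₀ = x]` that the chain started at `x`
hits `A` within the first `n` steps, where `τ_A = inf {n ≥ 1 : Xₙ ∈ A}`. -/
noncomputable def hitLE (P : Kernel X X) (A : Set X) : ℕ → X → ℝ≥0∞
  | 0 => fun _ => 0
  | n + 1 => fun x => ∫⁻ y, (A.indicator (fun _ => 1) y + Aᶜ.indicator (hitLE P A n) y) ∂(P x)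

/-- `hitProb P A x` is the probability `P[τ_A < ∞ | X₀ = x]`. -/
noncomputable def hitProb (P : Kernel X X) (A : Set X) (x : X) : ℝ≥0∞ :=
  ⨆ n, hitLE P A n x

/-- `stayLE P A n x` is the probability `P[X_k ∈ A for all 1 ≤ k ≤ n | X₀ = x]`. -/
noncomputable def stayLE (P : Kernel X X) (A : Set X) : ℕ → X → ℝ≥0∞
  | 0 => fun _ => 1
  | n + 1 => fun x => ∫⁻ y, A.indicator (stayLE P A n) y ∂(P x)

/-- `stayProb P A x` is the probability `P[Xₙ ∈ A for all n ≥ 0 | X₀ = x]`. -/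
noncomputable def stayProb (P : Kernel X X) (A : Set X) (x : X) : ℝ≥0∞ :=
  A.indicator (fun x' => ⨅ n, stayLE P A n x') x

/-- `ioProb P A x` is the probability `P[Xₙ ∈ A infinitely often | X₀ = x]`. -/
noncomputable def ioProb (P : Kernel X X) (A : Set X) (x : X) : ℝ≥0∞ :=
  ⨅ N, ∫⁻ y, hitProb P A y ∂(iterK P N x)

/-- `pathProb P g` is the probability `P[Xₙ = g n for all n | X₀ = g 0]` that the chain
started at `g 0` follows the deterministic trajectory `g`. -/
noncomputable def pathProb (P : Kernel X X) (g : ℕ → X) : ℝ≥0∞ :=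
  ⨅ N, ∏ n ∈ Finset.range N, P (g n) {g (n + 1)}

/-- Total variation distance between two measures. -/
noncomputable def tvDist (μ ν : Measure X) : ℝ :=
  ⨆ A : {A : Set X // MeasurableSet A}, |(μ A).toReal - (ν A).toReal|

/-- `π` is a stationary distribution for the kernel `P`. -/
def Stationary (P : Kernel X X) (π : Measure X) : Prop :=
  ∀ A : Set X, MeasurableSet A → ∫⁻ x, P x A ∂π = π A

/-- The chain `P`, started from any point of `S`, is `φ`-irreducible. -/
def IrreducibleOn (P : Kernel X X) (φ : Measure X) (S : Set X) : Prop :=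
  φ ≠ 0 ∧ ∀ x ∈ S, ∀ A : Set X, MeasurableSet A → 0 < φ A → 0 < hitProb P A x

/-- The chain `P` is `φ`-irreducible (from every point of `S`) for some nonzero σ-finite `φ`. -/
def PhiIrreducibleOn (P : Kernel X X) (S : Set X) : Prop :=
  ∃ φ : Measure X, SigmaFinite φ ∧ IrreducibleOn P φ S

/-- Harris recurrence (for starting points in `S`): every set of positive `π`-measure is
reached in finite time with probability one from every `x ∈ S`. -/
def HarrisRecurrentOn (P : Kernel X X) (π : Measure X) (S : Set X) : Prop :=
  ∀ A : Set X, MeasurableSet A → 0 < π A → ∀ x ∈ S, hitProb P A x = 1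

/-- There is a `D`-cycle: disjoint sets `C 0, …, C (D-1)` of positive `π`-measure through
which the chain cycles with probability one. -/
def HasCycle (P : Kernel X X) (π : Measure X) (D : ℕ) : Prop :=
  ∃ C : ℕ → Set X, (∀ i < D, MeasurableSet (C i)) ∧
    (∀ i < D, ∀ j < D, i ≠ j → Disjoint (C i) (C j)) ∧
    (∀ i < D, 0 < π (C i)) ∧
    ∀ i < D, ∀ x ∈ C i, P x (C ((i + 1) % D)) = 1

/-- The period of the chain is `D`: `D` is the largest positive integer admitting a `D`-cycle. -/
def IsPeriod (P : Kernel X X) (π : Measure X) (D : ℕ) : Prop :=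
  0 < D ∧ HasCycle P π D ∧ ∀ D' : ℕ, 0 < D' → HasCycle P π D' → D' ≤ D

/-- The chain is aperiodic: its period is `1`. -/
def Aperiodic (P : Kernel X X) (π : Measure X) : Prop :=
  IsPeriod P π 1

/-- The Cesàro average `(1/D) ∑_{r=1}^D P^{nD+r}(x, ·)`. -/
noncomputable def cesaro (P : Kernel X X) (D n : ℕ) (x : X) : Measure X :=
  (D : ℝ≥0∞)⁻¹ • ∑ r ∈ Finset.range D, iterK P (n * D + (r + 1)) x

end MCMCHarris

open MCMCHarris MeasureTheory ProbabilityTheory Filter Set ENNReal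

set_option linter.unusedSectionVars false
section MHAux

variable {X : Type*} [MeasurableSpace X] (P : Kernel X X) [IsMarkovKernel P] {A : Set X}

lemma mh_measurable_hitLE (hA : MeasurableSet A) (n : ℕ) : Measurable (hitLE P A n) := by
  induction n with
  | zero => exact measurable_const
  | succ n ih =>
    have h1 : Measurable fun y => A.indicator (fun _ => (1 : ℝ≥0∞)) y +
        Aᶜ.indicator (hitLE P A n) y :=
      (measurable_const.indicator hA).add (ih.indicator hA.compl)
    exact Measurable.lintegral_kernel_prod_right
      (f := fun _ y => A.indicator (fun _ => (1 : ℝ≥0∞)) y + Aᶜ.indicator (hitLE P A n) y)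
      (h1.comp measurable_snd)

lemma mh_hitLE_le_one (n : ℕ) (x : X) : hitLE P A n x ≤ 1 := by
  induction n generalizing x with
  | zero => simp [hitLE]
  | succ n ih =>
    simp only [hitLE]
    calc ∫⁻ y, (A.indicator (fun _ => (1:ℝ≥0∞)) y + Aᶜ.indicator (hitLE P A n) y) ∂(P x)
        ≤ ∫⁻ _, 1 ∂(P x) := by
          refine lintegral_mono fun y => ?_
          by_cases hy : y ∈ A
          · simp [Set.indicator_of_mem hy, Set.indicator_of_notMem (show y ∉ Aᶜ by simp [hy])]
          · simp [Set.indicator_of_notMem hy, Set.indicator_of_mem (Set.mem_compl hy), ih y]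
      _ = 1 := by simp

lemma mh_hitLE_mono_succ (n : ℕ) (x : X) : hitLE P A n x ≤ hitLE P A (n + 1) x := by
  induction n generalizing x with
  | zero => simp [hitLE]
  | succ n ih =>
    simp only [hitLE]
    refine lintegral_mono fun y => add_le_add le_rfl ?_
    by_cases hy : y ∈ Aᶜ
    · simpa [Set.indicator_of_mem hy, hitLE] using ih y
    · simp [Set.indicator_of_notMem hy]

lemma mh_measurable_hitProb (hA : MeasurableSet A) : Measurable (hitProb P A) :=
  Measurable.iSup fun n => mh_measurable_hitLE P hA n

lemma mh_hitProb_le_one (x : X) : hitProb P A x ≤ 1 :=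
  iSup_le fun n => mh_hitLE_le_one P n x

/-- The "one-step" function: probability of hitting `A` at time ≥ 0 (i.e. counting the
current state). -/
noncomputable def mhG (P : Kernel X X) (A : Set X) : X → ℝ≥0∞ :=
  fun y => A.indicator (fun _ => 1) y + Aᶜ.indicator (hitProb P A) y

lemma mh_measurable_G (hA : MeasurableSet A) : Measurable (mhG P A) :=
  (measurable_const.indicator hA).add ((mh_measurable_hitProb P hA).indicator hA.compl)

lemma mhG_of_mem {y : X} (hy : y ∈ A) : mhG P A y = 1 := by
  simp [mhG, Set.indicator_of_mem hy, Set.indicator_of_notMem (show y ∉ Aᶜ by simp [hy])]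

lemma mhG_of_not_mem {y : X} (hy : y ∉ A) : mhG P A y = hitProb P A y := by
  simp [mhG, Set.indicator_of_notMem hy, Set.indicator_of_mem (Set.mem_compl hy)]

lemma mh_hitProb_le_G (y : X) : hitProb P A y ≤ mhG P A y := by
  by_cases hy : y ∈ A
  · rw [mhG_of_mem P hy]; exact mh_hitProb_le_one P y
  · rw [mhG_of_not_mem P hy]

lemma mh_hitProb_eq_lintegral_G (hA : MeasurableSet A) (x : X) :
    hitProb P A x = ∫⁻ y, mhG P A y ∂(P x) := by
  have hshift : hitProb P A x = ⨆ n, hitLE P A (n + 1) x := by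
    refine le_antisymm (iSup_le fun n => ?_)
      (iSup_le fun n => le_iSup (fun m => hitLE P A m x) (n + 1))
    exact (mh_hitLE_mono_succ P n x).trans (le_iSup (fun m => hitLE P A (m + 1) x) n)
  rw [hshift]
  simp only [hitLE]
  rw [← lintegral_iSup]
  · refine lintegral_congr fun y => ?_
    by_cases hy : y ∈ A
    · simp [Set.indicator_of_mem hy, Set.indicator_of_notMem (show y ∉ Aᶜ by simp [hy]),
        mhG_of_mem P hy]
    · simp only [Set.indicator_of_notMem hy, Set.indicator_of_mem (Set.mem_compl hy),
        mhG_of_not_mem P hy, zero_add, hitProb]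
  · exact fun n => (measurable_const.indicator hA).add
      ((mh_measurable_hitLE P hA n).indicator hA.compl)
  · intro n m hnm y
    refine add_le_add le_rfl ?_
    by_cases hy : y ∈ Aᶜ
    · simp only [Set.indicator_of_mem hy]
      exact monotone_nat_of_le_succ (fun k => mh_hitLE_mono_succ P k y) hnm
    · simp [Set.indicator_of_notMem hy]

lemma mh_ae_mem_of_absorb {E : Set X} (hE : MeasurableSet E) {z : X} (hz : P z E = 1) :
    ∀ᵐ y ∂(P z), y ∈ E := by
  rw [ae_iff]
  have : P z Eᶜ = 0 := by rw [prob_compl_eq_zero_iff hE]; exact hz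
  simpa [Set.compl_def] using this

lemma mh_hitLE_zero_of_absorb {E D : Set X} (hE : MeasurableSet E)
    (habs : ∀ z ∈ E, P z E = 1) (hdisj : ∀ z ∈ E, z ∉ D) :
    ∀ n, ∀ z ∈ E, hitLE P D n z = 0 := by
  intro n
  induction n with
  | zero => intro z _; simp [hitLE]
  | succ n ih =>
    intro z hz
    simp only [hitLE]
    have hae := mh_ae_mem_of_absorb P hE (habs z hz)
    rw [show (0:ℝ≥0∞) = ∫⁻ _, 0 ∂(P z) by simp]
    refine lintegral_congr_ae ?_
    filter_upwards [hae] with y hy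
    have h1 : D.indicator (fun _ => (1:ℝ≥0∞)) y = 0 :=
      Set.indicator_of_notMem (hdisj y hy) _
    by_cases hyD : y ∈ Dᶜ
    · simp [h1, Set.indicator_of_mem hyD, ih y hy]
    · simp [h1, Set.indicator_of_notMem hyD]

lemma mh_hitProb_zero_of_absorb {E D : Set X} (hE : MeasurableSet E)
    (habs : ∀ z ∈ E, P z E = 1) (hdisj : ∀ z ∈ E, z ∉ D) :
    ∀ z ∈ E, hitProb P D z = 0 := by
  intro z hz
  simp only [hitProb]
  exact iSup_eq_zero.mpr fun n => mh_hitLE_zero_of_absorb P hE habs hdisj n z hz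

variable {π : Measure X} [IsProbabilityMeasure π]

lemma mh_ae_kernel_zero_of_null (hstat : Stationary P π) {S : Set X}
    (hS : MeasurableSet S) (hnull : π S = 0) : ∀ᵐ x ∂π, P x S = 0 := by
  have h := hstat S hS
  rw [hnull] at h
  have h2 := (lintegral_eq_zero_iff (P.measurable_coe hS)).mp h
  filter_upwards [h2] with x hx using hx

lemma mh_ae_compl_kernel_zero (hstat : Stationary P π) {E : Set X}
    (hE : MeasurableSet E) (habs : ∀ z ∈ E, P z E = 1) :
    ∀ᵐ x ∂π, x ∈ Eᶜ → P x E = 0 := by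
  have key := hstat E hE
  rw [← lintegral_add_compl (fun x => P x E) hE] at key
  have hEpart : ∫⁻ x in E, P x E ∂π = π E := by
    rw [setLIntegral_congr_fun hE (fun x hx => habs x hx)]
    simp
  rw [hEpart] at key
  have hzero : ∫⁻ x in Eᶜ, P x E ∂π = 0 := by
    have h2 : π E + ∫⁻ x in Eᶜ, P x E ∂π = π E + 0 := by simpa using key
    exact (ENNReal.add_right_inj (measure_ne_top π E)).mp h2
  exact (setLIntegral_eq_zero_iff hE.compl (P.measurable_coe hE)).mp hzero

lemma mh_pi_compl_eq_zero (hstat : Stationary P π) {E : Set X} (hE : MeasurableSet E)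
    (habs : ∀ z ∈ E, P z E = 1) (hreach : ∀ x, 0 < hitProb P E x) : π Eᶜ = 0 := by
  have hstep : ∀ n : ℕ, ∀ᵐ x ∂π, x ∈ Eᶜ → hitLE P E n x = 0 := by
    intro n
    induction n with
    | zero => exact ae_of_all _ (by intro x _; simp [hitLE])
    | succ n ih =>
      set S := Eᶜ ∩ {x | hitLE P E n x ≠ 0} with hSdef
      have hSm : MeasurableSet S :=
        hE.compl.inter ((mh_measurable_hitLE P hE n) (measurableSet_singleton 0)).compl
      have hSnull : π S = 0 := by
        refine measure_mono_null ?_ (ae_iff.mp ih)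
        intro x hx hcon
        exact hx.2 (hcon hx.1)
      have h1 := mh_ae_kernel_zero_of_null P hstat hSm hSnull
      have h2 := mh_ae_compl_kernel_zero P hstat hE habs
      filter_upwards [h1, h2] with x hx1 hx2 hxE
      simp only [hitLE]
      rw [show (0:ℝ≥0∞) = ∫⁻ _, 0 ∂(P x) by simp]
      refine lintegral_congr_ae ?_
      have hyS : ∀ᵐ y ∂(P x), y ∉ S := by
        rw [ae_iff]; simpa using hx1
      have hyE : ∀ᵐ y ∂(P x), y ∉ E := by
        rw [ae_iff]; simpa using hx2 hxE
      filter_upwards [hyS, hyE] with y h1' h2'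
      have hzero : hitLE P E n y = 0 := by
        by_contra hne; exact h1' ⟨h2', hne⟩
      simp [Set.indicator_of_notMem h2', Set.indicator_of_mem (Set.mem_compl h2'), hzero]
  have hall : ∀ᵐ x ∂π, x ∈ Eᶜ → hitProb P E x = 0 := by
    have h := ae_all_iff.mpr hstep
    filter_upwards [h] with x hx hxE
    exact iSup_eq_zero.mpr fun n => hx n hxE
  by_contra hne
  have hT0 : π {x | ¬ (x ∈ Eᶜ → hitProb P E x = 0)} = 0 := ae_iff.mp hall
  rcases Set.not_subset.mp
      (show ¬ Eᶜ ⊆ {x | ¬ (x ∈ Eᶜ → hitProb P E x = 0)} from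
        fun hsub => hne (measure_mono_null hsub hT0)) with ⟨x, hxEc, hxT⟩
  rw [Set.mem_setOf_eq, not_not] at hxT
  exact absurd (hreach x) (by simp [hxT hxEc])

end MHAux

/-- Proposition 7. If a ϕ-irreducible Markov kernel with stationary
probability distribution `π` has a small set `C` (i.e. `π C > 0` and `P(x, ·) ≥ ε ν(·)` on `C`
for some `ε > 0` and probability measure `ν`) which is visited infinitely often with
probability one from every starting point, then the chain is Harris recurrent. -/
theorem prop7_small_set_harris {X : Type*} [MeasurableSpace X]
    (P : Kernel X X) [IsMarkovKernel P] (π : Measure X) [IsProbabilityMeasure π]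
    (hstat : Stationary P π) (hirr : PhiIrreducibleOn P Set.univ)
    (C : Set X) (hC : MeasurableSet C) (hCpos : 0 < π C)
    (ε : ℝ≥0∞) (hε : 0 < ε) (ν : Measure X) [IsProbabilityMeasure ν]
    (hsmall : ∀ x ∈ C, ∀ A : Set X, MeasurableSet A → ε * ν A ≤ P x A)
    (hio : ∀ x, ioProb P C x = 1) :
    HarrisRecurrentOn P π Set.univ := by
  classical
  obtain ⟨φ, hφsf, hφne, hφirr⟩ := hirr
  intro A hA hApos x _
  -- `C` is hit with probability one from everywhere
  have hCone : ∀ z, hitProb P C z = 1 := by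
    intro z
    have h0 : ioProb P C z ≤ ∫⁻ y, hitProb P C y ∂(iterK P 0 z) :=
      iInf_le (fun N => ∫⁻ y, hitProb P C y ∂(iterK P N z)) 0
    rw [hio z, show iterK P 0 = Kernel.id from rfl, Kernel.id_apply,
      lintegral_dirac' z (mh_measurable_hitProb P hC)] at h0
    exact le_antisymm (mh_hitProb_le_one P z) h0
  obtain ⟨y₀, hy₀⟩ : C.Nonempty := nonempty_of_measure_ne_zero hCpos.ne'
  have hε1 : ε ≤ 1 := by
    have h := hsmall y₀ hy₀ Set.univ MeasurableSet.univ
    simpa using h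
  have hεtop : ε ≠ ∞ := (hε1.trans_lt ENNReal.one_lt_top).ne
  haveI : Nonempty C := ⟨⟨y₀, hy₀⟩⟩
  set β : ℝ≥0∞ := ⨅ y : C, hitProb P A y with hβdef
  have hβle : ∀ y ∈ C, β ≤ hitProb P A y := fun y hy =>
    iInf_le (fun z : C => hitProb P A z) ⟨y, hy⟩
  have hβ1 : β ≤ 1 := (hβle y₀ hy₀).trans (mh_hitProb_le_one P y₀)
  have hβtop : β ≠ ∞ := (hβ1.trans_lt ENNReal.one_lt_top).ne
  -- the hitting probability of `A` is everywhere at least its infimum over `C`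
  have hkey : ∀ n, ∀ z, β * hitLE P C n z ≤ hitProb P A z := by
    intro n
    induction n with
    | zero => intro z; simp [hitLE]
    | succ n ih =>
      intro z
      rw [mh_hitProb_eq_lintegral_G P hA z]
      simp only [hitLE]
      rw [← lintegral_const_mul β
        (f := fun y => C.indicator (fun _ => (1:ℝ≥0∞)) y + Cᶜ.indicator (hitLE P C n) y)
        ((measurable_const.indicator hC).add
        ((mh_measurable_hitLE P hC n).indicator hC.compl))]
      refine lintegral_mono fun y => ?_
      by_cases hy : y ∈ C
      · rw [Set.indicator_of_mem hy, Set.indicator_of_notMem (show y ∉ Cᶜ by simp [hy])]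
        simpa using (hβle y hy).trans (mh_hitProb_le_G P y)
      · rw [Set.indicator_of_notMem hy, Set.indicator_of_mem (Set.mem_compl hy), zero_add]
        exact (ih y).trans (mh_hitProb_le_G P y)
  have hβall : ∀ z, β ≤ hitProb P A z := by
    intro z
    calc β = β * hitProb P C z := by rw [hCone z, mul_one]
      _ = ⨆ n, β * hitLE P C n z := by rw [hitProb, ENNReal.mul_iSup]
      _ ≤ hitProb P A z := iSup_le fun n => hkey n z
  have hGβ : ∀ z, β ≤ mhG P A z := fun z => (hβall z).trans (mh_hitProb_le_G P z)
  set δ : ℝ≥0∞ := ∫⁻ z, mhG P A z ∂ν with hδdef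
  have hβδ : β ≤ δ := by
    calc β = ∫⁻ _, β ∂ν := by simp
      _ ≤ δ := lintegral_mono hGβ
  -- small-set regeneration inequality
  have hpt : ∀ y ∈ C, β + ε * δ ≤ hitProb P A y + ε * β := by
    intro y hy
    have hle : (ε • ν) ≤ P y := Measure.le_iff.mpr fun s hs => by
      simpa [Measure.smul_apply, smul_eq_mul] using hsmall y hy s hs
    haveI : IsFiniteMeasure (ε • ν) := by
      constructor
      simp only [Measure.smul_apply, smul_eq_mul, measure_univ, mul_one]
      exact hεtop.lt_top
    have hdec : P y - ε • ν + ε • ν = P y := Measure.sub_add_cancel_of_le hle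
    have hsplit : hitProb P A y = (∫⁻ z, mhG P A z ∂(P y - ε • ν)) + ε * δ := by
      rw [mh_hitProb_eq_lintegral_G P hA y]
      conv_lhs => rw [← hdec]
      rw [lintegral_add_measure, lintegral_smul_measure, smul_eq_mul]
    have hmass : (P y - ε • ν) Set.univ + ε = 1 := by
      have h1 : (P y - ε • ν + ε • ν) Set.univ = 1 := by rw [hdec]; exact measure_univ
      simpa [Measure.smul_apply, smul_eq_mul, measure_univ] using h1
    have hR : β * ((P y - ε • ν) Set.univ) ≤ ∫⁻ z, mhG P A z ∂(P y - ε • ν) := by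
      calc β * ((P y - ε • ν) Set.univ) = ∫⁻ _, β ∂(P y - ε • ν) := (lintegral_const β).symm
        _ ≤ _ := lintegral_mono hGβ
    calc β + ε * δ = β * ((P y - ε • ν) Set.univ + ε) + ε * δ := by rw [hmass, mul_one]
      _ = (β * ((P y - ε • ν) Set.univ) + ε * δ) + ε * β := by ring
      _ ≤ ((∫⁻ z, mhG P A z ∂(P y - ε • ν)) + ε * δ) + ε * β :=
          add_le_add (add_le_add hR le_rfl) le_rfl
      _ = hitProb P A y + ε * β := by rw [← hsplit]
  have hδβ : δ ≤ β := by
    have h1 : β + ε * δ ≤ (⨅ y : C, hitProb P A y) + ε * β := by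
      conv_rhs => rw [ENNReal.iInf_add]
      exact le_iInf fun (y : C) => hpt y.1 y.2
    rw [← hβdef] at h1
    have h2 : ε * δ ≤ ε * β := (ENNReal.add_le_add_iff_left hβtop).mp h1
    exact (ENNReal.mul_le_mul_iff_right hε.ne' hεtop).mp h2
  have hδeq : δ = β := le_antisymm hδβ hβδ
  rcases le_or_gt 1 β with hb1 | hblt
  · exact le_antisymm (mh_hitProb_le_one P x) (hb1.trans (hβall x))
  exfalso
  -- rigidity: any probability measure whose `mhG`-average equals `β` is carried by `E`
  set E : Set X := {z | mhG P A z = β} with hEdef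
  have hEm : MeasurableSet E := mh_measurable_G P hA (measurableSet_singleton β)
  have hrigid : ∀ (μ : Measure X), IsProbabilityMeasure μ →
      (∫⁻ z, mhG P A z ∂μ) = β → μ E = 1 := by
    intro μ hinst hμint
    haveI := hinst
    have hfin : (∫⁻ _, β ∂μ) ≠ ∞ := by
      simp only [lintegral_const, measure_univ, mul_one]
      exact hβtop
    have hsub : ∫⁻ z, (mhG P A z - β) ∂μ = 0 := by
      rw [lintegral_sub measurable_const hfin (ae_of_all _ hGβ), hμint]
      simp only [lintegral_const, measure_univ, mul_one, tsub_self]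
    have hae := (lintegral_eq_zero_iff ((mh_measurable_G P hA).sub measurable_const)).mp hsub
    have haeE : ∀ᵐ z ∂μ, z ∈ E := by
      filter_upwards [hae] with z hz
      simp only [Pi.zero_apply] at hz
      exact le_antisymm (tsub_eq_zero_iff_le.mp hz) (hGβ z)
    refine (prob_compl_eq_zero_iff hEm).mp ?_
    rw [ae_iff] at haeE
    simpa [Set.compl_def] using haeE
  have hνE : ν E = 1 := hrigid ν inferInstance hδeq
  obtain ⟨z₀, hz₀⟩ : E.Nonempty :=
    nonempty_of_measure_ne_zero (by rw [hνE]; exact one_ne_zero)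
  have hEsub : ∀ z ∈ E, z ∉ A := by
    intro z hz hzA
    have h1 : mhG P A z = β := hz
    rw [mhG_of_mem P hzA] at h1
    exact absurd h1.symm hblt.ne
  have hEhit : ∀ z ∈ E, hitProb P A z = β := by
    intro z hz
    rw [← mhG_of_not_mem P (hEsub z hz)]
    exact hz
  have habs : ∀ z ∈ E, P z E = 1 := by
    intro z hz
    refine hrigid (P z) inferInstance ?_
    rw [← mh_hitProb_eq_lintegral_G P hA z]
    exact hEhit z hz
  have hAboE : ∀ z ∈ E, hitProb P Eᶜ z = 0 :=
    mh_hitProb_zero_of_absorb P hEm habs (fun z hz => by simp [hz])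
  have hφEc : φ Eᶜ = 0 := by
    by_contra hne
    have h1 := hφirr z₀ (Set.mem_univ _) Eᶜ hEm.compl (pos_iff_ne_zero.mpr hne)
    rw [hAboE z₀ hz₀] at h1
    exact lt_irrefl 0 h1
  have hφE : 0 < φ E := by
    have h1 : φ Set.univ ≠ 0 := fun h => hφne (Measure.measure_univ_eq_zero.mp h)
    have h2 : φ Set.univ ≤ φ E + φ Eᶜ := by
      rw [← Set.union_compl_self E]
      exact measure_union_le E Eᶜ
    rw [hφEc, add_zero] at h2
    exact pos_iff_ne_zero.mpr fun h => h1 (le_antisymm (h ▸ h2) (zero_le'))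
  have hreach : ∀ z, 0 < hitProb P E z := fun z => hφirr z (Set.mem_univ _) E hEm hφE
  have hπEc : π Eᶜ = 0 := mh_pi_compl_eq_zero P hstat hEm habs hreach
  have hπA : π A = 0 := by
    have hAe : (fun w => P w A) =ᵐ[π] 0 := by
      have hπE : ∀ᵐ w ∂π, w ∈ E := by
        rw [ae_iff]; simpa [Set.compl_def] using hπEc
      filter_upwards [hπE] with w hw
      have h2 : P w Eᶜ = 0 := by
        rw [prob_compl_eq_zero_iff hEm]; exact habs w hw
      have h3 : P w A = 0 :=
        measure_mono_null (fun a ha (haE : a ∈ E) => hEsub a haE ha) h2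
      simpa using h3
    rw [← hstat A hA, lintegral_congr_ae hAe]
    simp
  exact absurd hπA hApos.ne'
end

section
/- Let X = [0, 1] and define a Markov transition kernel P on X as follows: if x = 1/m for a positive integer m, then P(x, ·) = x² · Uniform[0,1] + (1 − x²) · δ_{1/(m+1)}; for all other x, P(x, ·) = Uniform[0,1]. Then the Uniform[0,1] distribution is stationary for P, the chain is ϕ-irreducible with respect to Uniform[0,1] and aperiodic, and for every integer m ≥ 2, the probability that X_n = 1/(m+n) for all n ≥ 1 given X_0 = 1/m equals ∏_{j=m}^{∞} (1 − 1/j²), which is strictly positive; consequently ‖P^n(1/m, ·) − Uniform[0,1]‖ does not converge to 0 for any m ≥ 2. -/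
open MeasureTheory ProbabilityTheory Filter Set ENNReal

open MCMCHarris MeasureTheory ProbabilityTheory Filter Set ENNReal

/-- The Uniform[0,1] distribution, viewed as a measure on the state space `[0,1]`. -/
noncomputable def unif01 : Measure (Set.Icc (0 : ℝ) 1) :=
  Measure.comap Subtype.val volume

section Helpers

open MCMCHarris

local notation "I01" => Set.Icc (0 : ℝ) 1

lemma unif01_apply (s : Set I01) : unif01 s = volume (Subtype.val '' s) :=
  (MeasurableEmbedding.subtype_coe measurableSet_Icc).comap_apply _ _

instance : IsProbabilityMeasure unif01 := by
  constructor
  rw [unif01_apply, Subtype.coe_image_univ]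
  simp [Real.volume_Icc]

instance : NullSingletonClass unif01 := by
  constructor
  intro x
  rw [unif01_apply, Set.image_singleton]
  exact Real.volume_singleton

/-- The set of reciprocals of positive integers inside `[0,1]`. -/
def recipSet : Set I01 := {x | ∃ m : ℕ, 1 ≤ m ∧ (x : ℝ) = 1 / m}

lemma recipSet_countable : recipSet.Countable := by
  have h : recipSet = Subtype.val ⁻¹' {r : ℝ | ∃ m : ℕ, 1 ≤ m ∧ r = 1 / m} := rfl
  rw [h]
  apply Set.Countable.preimage _ Subtype.val_injective
  have hsub : {r : ℝ | ∃ m : ℕ, 1 ≤ m ∧ r = 1 / m} ⊆ Set.range (fun m : ℕ => 1 / (m : ℝ)) := by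
    rintro r ⟨m, _, rfl⟩; exact ⟨m, rfl⟩
  exact (Set.countable_range _).mono hsub

lemma recipSet_null : unif01 recipSet = 0 :=
  recipSet_countable.measure_zero _

lemma inv_sq_ennreal (k : ℕ) (hk : 1 ≤ k) :
    1 / ((k : ℝ≥0∞)) ^ 2 = ENNReal.ofReal ((1 / (k : ℝ)) ^ 2) := by
  have hk' : (0 : ℝ) < k := by exact_mod_cast hk
  rw [ENNReal.ofReal_pow (by positivity), one_div, one_div,
    ENNReal.ofReal_inv_of_pos hk', ENNReal.ofReal_natCast]
  exact ENNReal.inv_pow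

lemma ofReal_one_sub_sq (k : ℕ) (hk : 1 ≤ k) :
    ENNReal.ofReal (1 - (1 / (k : ℝ)) ^ 2) = 1 - 1 / ((k : ℝ≥0∞)) ^ 2 := by
  rw [ENNReal.ofReal_sub _ (by positivity), ENNReal.ofReal_one, inv_sq_ennreal k hk]

lemma sum_inv_sq_le_real (N : ℕ) : ∀ m : ℕ, 1 ≤ m →
    ∑ n ∈ Finset.range N, (1 / (((m + 1 + n : ℕ)) : ℝ)) ^ 2 ≤ 1 / (m : ℝ) := by
  induction N with
  | zero => intro m hm; simp
  | succ N ih =>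
    intro m hm
    have hm' : (1 : ℝ) ≤ m := by exact_mod_cast hm
    rw [Finset.sum_range_succ']
    have h1 : ∀ n ∈ Finset.range N,
        (1 / (((m + 1 + (n + 1) : ℕ)) : ℝ)) ^ 2 = (1 / ((((m + 1) + 1 + n : ℕ)) : ℝ)) ^ 2 := by
      intro n _; congr 3; omega
    rw [Finset.sum_congr rfl h1]
    have h2 := ih (m + 1) (by omega)
    have h3 : (1 / (((m + 1 + 0 : ℕ)) : ℝ)) ^ 2 = (1 / ((m : ℝ) + 1)) ^ 2 := by
      push_cast; ring_nf
    rw [h3]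
    have hmp : (0 : ℝ) < m := by linarith
    have hkey : (1 / ((m : ℝ) + 1)) ^ 2 + 1 / ((m : ℝ) + 1) ≤ 1 / (m : ℝ) := by
      rw [div_pow, one_pow, div_add_div _ _ (by positivity) (by positivity),
        div_le_div_iff₀ (by positivity) (by positivity)]
      ring_nf
      nlinarith
    calc ∑ n ∈ Finset.range N, (1 / (((m + 1 + 1 + n : ℕ)) : ℝ)) ^ 2 + (1 / ((m : ℝ) + 1)) ^ 2
        ≤ 1 / ((m : ℝ) + 1) + (1 / ((m : ℝ) + 1)) ^ 2 := by
          push_cast at h2 ⊢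
          linarith
      _ ≤ 1 / (m : ℝ) := by linarith

lemma sum_inv_sq_le (N m : ℕ) (hm : 2 ≤ m) :
    ∑ n ∈ Finset.range N, (1 / (((m + n : ℕ)) : ℝ)) ^ 2 ≤ 3 / 4 := by
  cases N with
  | zero => norm_num
  | succ N =>
    rw [Finset.sum_range_succ']
    have h1 : ∀ n ∈ Finset.range N,
        (1 / (((m + (n + 1) : ℕ)) : ℝ)) ^ 2 = (1 / ((((m - 1) + 1 + 1 + n : ℕ)) : ℝ)) ^ 2 := by
      intro n _; congr 3; omega
    rw [Finset.sum_congr rfl h1]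
    have h2 := sum_inv_sq_le_real N (m - 1 + 1) (by omega)
    have h3 : ∑ n ∈ Finset.range N, (1 / ((((m - 1) + 1 + 1 + n : ℕ)) : ℝ)) ^ 2
        ≤ 1 / ((m - 1 + 1 : ℕ) : ℝ) := by
      convert h2 using 3 with n _
    have hm2 : (2 : ℝ) ≤ (m : ℝ) := by exact_mod_cast hm
    have h4 : 1 / ((m - 1 + 1 : ℕ) : ℝ) ≤ 1 / 2 := by
      have hh : ((m - 1 + 1 : ℕ) : ℝ) = (m : ℝ) := by
        push_cast [Nat.sub_add_cancel (by omega : 1 ≤ m)]; ring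
      rw [hh, div_le_div_iff₀ (by linarith) (by norm_num)]; linarith
    have h5 : (1 / (((m + 0 : ℕ)) : ℝ)) ^ 2 ≤ 1 / 4 := by
      have hh : ((m + 0 : ℕ) : ℝ) = (m : ℝ) := by push_cast; ring
      rw [hh, div_pow, one_pow, div_le_div_iff₀ (by positivity) (by norm_num)]
      nlinarith
    linarith

lemma one_sub_sum_le_prod (x : ℕ → ℝ≥0∞) (N : ℕ) :
    1 - ∑ n ∈ Finset.range N, x n ≤ ∏ n ∈ Finset.range N, (1 - x n) := by
  induction N with
  | zero => simp
  | succ N ih =>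
    have hprod : ∏ n ∈ Finset.range N, (1 - x n) ≤ 1 :=
      Finset.prod_le_one (fun _ _ => zero_le) (fun n _ => tsub_le_self)
    rw [Finset.sum_range_succ, Finset.prod_range_succ, ← tsub_tsub]
    calc 1 - ∑ n ∈ Finset.range N, x n - x N
        ≤ (∏ n ∈ Finset.range N, (1 - x n)) - x N := tsub_le_tsub_right ih _
      _ ≤ (∏ n ∈ Finset.range N, (1 - x n)) - (∏ n ∈ Finset.range N, (1 - x n)) * x N :=
          tsub_le_tsub_left (mul_le_of_le_one_left' hprod) _
      _ = (∏ n ∈ Finset.range N, (1 - x n)) * (1 - x N) := by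
          rw [ENNReal.mul_sub (fun _ _ => (lt_of_le_of_lt hprod one_lt_top).ne), mul_one]

lemma prod_finset_antitone (b : ℕ → ℝ≥0∞) (hb : ∀ n, b n ≤ 1) :
    Antitone (fun s : Finset ℕ => ∏ n ∈ s, b n) := by
  intro s t hst
  simp only
  rw [← Finset.prod_sdiff hst]
  exact mul_le_of_le_one_left' (Finset.prod_le_one (fun _ _ => zero_le) (fun n _ => hb n))

lemma tprod_eq_iInf (b : ℕ → ℝ≥0∞) (hb : ∀ n, b n ≤ 1) :
    ∏' n, b n = ⨅ N, ∏ n ∈ Finset.range N, b n := by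
  have hp : HasProd b (⨅ s : Finset ℕ, ∏ n ∈ s, b n) :=
    tendsto_atTop_iInf (prod_finset_antitone b hb)
  rw [hp.tprod_eq]
  apply le_antisymm
  · exact le_iInf fun N => iInf_le _ (Finset.range N)
  · refine le_iInf fun s => ?_
    obtain ⟨N, hN⟩ := s.exists_nat_subset_range
    exact le_trans (iInf_le _ N) (prod_finset_antitone b hb hN)

variable {X : Type*} [MeasurableSpace X]

instance instIterK (P : Kernel X X) [IsMarkovKernel P] (n : ℕ) :
    IsMarkovKernel (iterK P n) := by
  induction n with
  | zero => rw [iterK]; infer_instance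
  | succ n ih => rw [iterK]; infer_instance

lemma iterK_path_le (P : Kernel X X) [IsMarkovKernel P] [MeasurableSingletonClass X] :
    ∀ (n : ℕ) (g : ℕ → X),
      ∏ i ∈ Finset.range n, P (g i) {g (i + 1)} ≤ iterK P n (g 0) {g n} := by
  intro n
  induction n with
  | zero =>
    intro g
    simp [iterK, Kernel.id_apply]
  | succ n ih =>
    intro g
    have hcomp : iterK P (n + 1) (g 0) {g (n + 1)} =
        ∫⁻ y, iterK P n y {g (n + 1)} ∂(P (g 0)) := by
      rw [iterK]
      exact Kernel.comp_apply' _ _ _ (measurableSet_singleton _)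
    have hind : ∀ y, ({g 1} : Set X).indicator (fun _ => iterK P n (g 1) {g (n + 1)}) y
        ≤ iterK P n y {g (n + 1)} := by
      intro y
      apply Set.indicator_le (fun z hz => ?_) y
      rw [Set.mem_singleton_iff] at hz
      rw [hz]
    calc ∏ i ∈ Finset.range (n + 1), P (g i) {g (i + 1)}
        = (∏ i ∈ Finset.range n, P (g (i + 1)) {g (i + 1 + 1)}) * P (g 0) {g 1} :=
          Finset.prod_range_succ' _ n
      _ ≤ iterK P n (g 1) {g (n + 1)} * P (g 0) {g 1} :=
          mul_le_mul_left (ih (fun i => g (i + 1))) _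
      _ = ∫⁻ y, ({g 1} : Set X).indicator
            (fun _ => iterK P n (g 1) {g (n + 1)}) y ∂(P (g 0)) := by
          rw [lintegral_indicator_const (measurableSet_singleton _)]
      _ ≤ ∫⁻ y, iterK P n y {g (n + 1)} ∂(P (g 0)) := lintegral_mono hind
      _ = iterK P (n + 1) (g 0) {g (n + 1)} := hcomp.symm

end Helpers

/-- Example 4. On the state space `X = [0,1]`, for the Markov kernel with
`P(1/m, ·) = (1/m)² · Uniform[0,1] + (1 − (1/m)²) · δ_{1/(m+1)}` for positive integers `m`,
and `P(x, ·) = Uniform[0,1]` for all other `x`: Uniform[0,1] is stationary, the chain is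
ϕ-irreducible with respect to Uniform[0,1] and aperiodic, and from any start `1/m` with
`m ≥ 2` the probability of following the path `n ↦ 1/(m+n)` forever equals
`∏_{j=m}^∞ (1 − 1/j²) > 0`; consequently `‖Pⁿ(1/m,·) − Uniform[0,1]‖ ↛ 0` for `m ≥ 2`. -/


theorem example4_continuous_null_set
    (P : Kernel (Set.Icc (0 : ℝ) 1) (Set.Icc (0 : ℝ) 1)) [IsMarkovKernel P]
    (hPrecip : ∀ m : ℕ, 1 ≤ m → ∀ x : Set.Icc (0 : ℝ) 1, (x : ℝ) = 1 / m →
      ∀ y : Set.Icc (0 : ℝ) 1, (y : ℝ) = 1 / (m + 1) →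
        P x = ENNReal.ofReal ((x : ℝ) ^ 2) • unif01 +
          ENNReal.ofReal (1 - (x : ℝ) ^ 2) • Measure.dirac y)
    (hPother : ∀ x : Set.Icc (0 : ℝ) 1, (∀ m : ℕ, 1 ≤ m → (x : ℝ) ≠ 1 / m) →
      P x = unif01) :
    Stationary P unif01 ∧
    IrreducibleOn P unif01 Set.univ ∧
    Aperiodic P unif01 ∧
    (∀ m : ℕ, 2 ≤ m → ∀ g : ℕ → Set.Icc (0 : ℝ) 1, (∀ n, (g n : ℝ) = 1 / (m + n)) →
      pathProb P g = ∏' j : ℕ, (1 - 1 / (((m + j : ℕ) : ℝ≥0∞)) ^ 2) ∧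
      0 < pathProb P g) ∧
    (∀ m : ℕ, 2 ≤ m → ∀ x : Set.Icc (0 : ℝ) 1, (x : ℝ) = 1 / m →
      ¬ Tendsto (fun n => tvDist (iterK P n x) unif01) atTop (nhds 0)) := by
    classical
  -- the key quantitative path-probability facts
  have key : ∀ m : ℕ, 2 ≤ m → ∀ g : ℕ → Set.Icc (0 : ℝ) 1, (∀ n, (g n : ℝ) = 1 / (m + n)) →
      pathProb P g = ∏' j : ℕ, (1 - 1 / (((m + j : ℕ) : ℝ≥0∞)) ^ 2) ∧
      (1 - ENNReal.ofReal (3 / 4)) ≤ pathProb P g := by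
    intro m hm g hg
    have hfac : ∀ n, P (g n) {g (n + 1)} = 1 - 1 / (((m + n : ℕ) : ℝ≥0∞)) ^ 2 := by
      intro n
      have hxv : (g n : ℝ) = 1 / ((m + n : ℕ) : ℝ) := by rw [hg n]; push_cast; ring
      have hyv : (g (n + 1) : ℝ) = 1 / (((m + n : ℕ) : ℝ) + 1) := by
        rw [hg (n + 1)]; push_cast; ring
      have hP := hPrecip (m + n) (by omega) (g n) hxv (g (n + 1)) hyv
      rw [hP]
      rw [Measure.add_apply, Measure.smul_apply, Measure.smul_apply, smul_eq_mul, smul_eq_mul,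
        measure_singleton, mul_zero, zero_add, Measure.dirac_apply]
      simp only [Set.indicator_of_mem (Set.mem_singleton _), Pi.one_apply, mul_one]
      rw [hxv, ofReal_one_sub_sq (m + n) (by omega)]
    have hb1 : ∀ n, (1 - 1 / (((m + n : ℕ) : ℝ≥0∞)) ^ 2) ≤ 1 := fun n => tsub_le_self
    have hpath : pathProb P g = ⨅ N, ∏ n ∈ Finset.range N,
        (1 - 1 / (((m + n : ℕ) : ℝ≥0∞)) ^ 2) := by
      unfold pathProb
      exact iInf_congr fun N => Finset.prod_congr rfl fun n _ => hfac n
    constructor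
    · rw [hpath, tprod_eq_iInf _ hb1]
    · rw [hpath]
      refine le_iInf fun N => ?_
      have hsum : ∑ n ∈ Finset.range N, 1 / (((m + n : ℕ) : ℝ≥0∞)) ^ 2
          ≤ ENNReal.ofReal (3 / 4) := by
        calc ∑ n ∈ Finset.range N, 1 / (((m + n : ℕ) : ℝ≥0∞)) ^ 2
            = ENNReal.ofReal (∑ n ∈ Finset.range N, (1 / (((m + n : ℕ)) : ℝ)) ^ 2) := by
              rw [ENNReal.ofReal_sum_of_nonneg (fun i _ => by positivity)]
              exact Finset.sum_congr rfl fun n _ => inv_sq_ennreal (m + n) (by omega)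
          _ ≤ ENNReal.ofReal (3 / 4) := ENNReal.ofReal_le_ofReal (sum_inv_sq_le N m hm)
      calc 1 - ENNReal.ofReal (3 / 4)
          ≤ 1 - ∑ n ∈ Finset.range N, 1 / (((m + n : ℕ) : ℝ≥0∞)) ^ 2 := tsub_le_tsub_left hsum 1
        _ ≤ ∏ n ∈ Finset.range N, (1 - 1 / (((m + n : ℕ) : ℝ≥0∞)) ^ 2) :=
            one_sub_sum_le_prod _ N
  have hc_pos : (0 : ℝ≥0∞) < 1 - ENNReal.ofReal (3 / 4) :=
    tsub_pos_of_lt (ENNReal.ofReal_lt_one.mpr (by norm_num))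
  refine ⟨?_, ?_, ?_, ?_, ?_⟩
  · -- Stationarity
    intro A hA
    have hae : ∀ᵐ x ∂unif01, P x A = unif01 A := by
      filter_upwards [MeasureTheory.compl_mem_ae_iff.mpr recipSet_null] with x hx
      rw [hPother x (fun m hm heq => hx ⟨m, hm, heq⟩)]
    rw [lintegral_congr_ae hae, lintegral_const, measure_univ, mul_one]
  · -- Irreducibility
    refine ⟨?_, ?_⟩
    · intro h0
      have : unif01 Set.univ = 0 := by rw [h0]; rfl
      rw [measure_univ] at this
      exact one_ne_zero this
    · intro x _ A hA hApos
      have h1 : hitLE P A 1 x = P x A := by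
        show (∫⁻ y, (A.indicator (fun _ => 1) y + Aᶜ.indicator (hitLE P A 0) y) ∂(P x)) = P x A
        have : ∀ y, A.indicator (fun _ => (1 : ℝ≥0∞)) y + Aᶜ.indicator (hitLE P A 0) y
            = A.indicator 1 y := by
          intro y
          show A.indicator (fun _ => (1 : ℝ≥0∞)) y + Aᶜ.indicator (fun _ => (0 : ℝ≥0∞)) y = _
          simp [Set.indicator]
        rw [lintegral_congr this, lintegral_indicator_one hA]
      have hPA : 0 < P x A := by
        by_cases hx : ∀ m : ℕ, 1 ≤ m → (x : ℝ) ≠ 1 / m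
        · rw [hPother x hx]; exact hApos
        · push_neg at hx
          obtain ⟨m, hm, hxm⟩ := hx
          have hmem : (1 : ℝ) / ((m : ℝ) + 1) ∈ Set.Icc (0 : ℝ) 1 := by
            constructor
            · positivity
            · rw [div_le_one (by positivity)]
              have : (1 : ℝ) ≤ (m : ℝ) := by exact_mod_cast hm
              linarith
          have hP := hPrecip m hm x hxm (⟨_, hmem⟩ : Set.Icc (0 : ℝ) 1) rfl
          rw [hP, Measure.add_apply, Measure.smul_apply, smul_eq_mul]
          have hx2 : 0 < ENNReal.ofReal ((x : ℝ) ^ 2) := by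
            rw [ENNReal.ofReal_pos, hxm]
            have : (1 : ℝ) ≤ (m : ℝ) := by exact_mod_cast hm
            positivity
          calc (0 : ℝ≥0∞) < ENNReal.ofReal ((x : ℝ) ^ 2) * unif01 A :=
                ENNReal.mul_pos hx2.ne' hApos.ne'
            _ ≤ _ := le_add_right le_rfl
      calc (0 : ℝ≥0∞) < P x A := hPA
        _ = hitLE P A 1 x := h1.symm
        _ ≤ hitProb P A x := le_iSup (fun n => hitLE P A n x) 1
  · -- Aperiodicity
    refine ⟨one_pos, ⟨fun _ => Set.univ, fun _ _ => MeasurableSet.univ,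
      fun i hi j hj hij => by omega, fun i _ => by rw [measure_univ]; exact one_pos,
      fun i _ x _ => measure_univ⟩, ?_⟩
    intro D' hD' ⟨C, hmeas, hdisj, hpos, hcyc⟩
    by_contra hcon
    push_neg at hcon
    have hD2 : 2 ≤ D' := hcon
    have h0lt : 0 < D' := hD'
    have h1lt : 1 < D' := hcon
    have hC0 := hpos 0 h0lt
    have hdiff : 0 < unif01 (C 0 \ recipSet) := by
      rw [measure_diff_null recipSet_null]; exact hC0
    obtain ⟨x, hxC, hxR⟩ := nonempty_of_measure_ne_zero hdiff.ne'
    have hPx : P x = unif01 := hPother x (fun m hm heq => hxR ⟨m, hm, heq⟩)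
    have hcy := hcyc 0 h0lt x hxC
    rw [hPx] at hcy
    have h01 : (0 + 1) % D' = 1 := Nat.mod_eq_of_lt h1lt
    rw [h01] at hcy
    have hdis := hdisj 0 h0lt 1 h1lt (by omega)
    have hun : unif01 (C 0 ∪ C 1) = unif01 (C 0) + unif01 (C 1) :=
      measure_union hdis (hmeas 1 h1lt)
    have hle : unif01 (C 0 ∪ C 1) ≤ 1 := by
      rw [← measure_univ (μ := unif01)]
      exact measure_mono (Set.subset_univ _)
    rw [hun, hcy] at hle
    have : unif01 (C 0) + 1 ≤ 0 + 1 := by rwa [zero_add]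
    have h0 : unif01 (C 0) ≤ 0 := by
      exact (ENNReal.add_le_add_iff_right one_ne_top).mp this
    exact absurd (le_antisymm h0 zero_le) hC0.ne'
  · -- path probability
    intro m hm g hg
    obtain ⟨h1, h2⟩ := key m hm g hg
    exact ⟨h1, lt_of_lt_of_le hc_pos h2⟩
  · -- no convergence in total variation
    intro m hm x hx hT
    have hmR : (1 : ℝ) ≤ (m : ℝ) := by exact_mod_cast (by omega : 1 ≤ m)
    have hmem : ∀ n : ℕ, (1 : ℝ) / ((m : ℝ) + (n : ℝ)) ∈ Set.Icc (0 : ℝ) 1 := by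
      intro n
      have hn0 : (0 : ℝ) ≤ (n : ℝ) := Nat.cast_nonneg n
      constructor
      · positivity
      · rw [div_le_one (by linarith)]; linarith
    set g : ℕ → Set.Icc (0 : ℝ) 1 := fun n => ⟨1 / ((m : ℝ) + (n : ℝ)), hmem n⟩ with hgdef
    have hg : ∀ n, (g n : ℝ) = 1 / (m + n) := fun n => rfl
    have hx0 : x = g 0 := by
      apply Subtype.ext
      rw [hx, hg 0]
      norm_num
    obtain ⟨_, hbound⟩ := key m hm g hg
    set c : ℝ≥0∞ := 1 - ENNReal.ofReal (3 / 4) with hcdef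
    have hc14 : c = ENNReal.ofReal (1 / 4) := by
      rw [hcdef, ← ENNReal.ofReal_one, ← ENNReal.ofReal_sub _ (by norm_num)]
      norm_num
    have hiter : ∀ n, c ≤ iterK P n x {g n} := by
      intro n
      rw [hx0]
      calc c ≤ pathProb P g := hbound
        _ ≤ ∏ i ∈ Finset.range n, P (g i) {g (i + 1)} := iInf_le _ n
        _ ≤ iterK P n (g 0) {g n} := iterK_path_le P n g
    set T : Set (Set.Icc (0 : ℝ) 1) := Set.range g with hTdef
    have hTcount : T.Countable := Set.countable_range g
    have hTmeas : MeasurableSet T := hTcount.measurableSet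
    have hTnull : unif01 T = 0 := hTcount.measure_zero _
    have htv : ∀ n, (1 / 4 : ℝ) ≤ tvDist (iterK P n x) unif01 := by
      intro n
      have hTn : c ≤ iterK P n x T :=
        le_trans (hiter n) (measure_mono (Set.singleton_subset_iff.mpr ⟨n, rfl⟩))
      have hbdd : BddAbove (Set.range fun A : {A : Set (Set.Icc (0 : ℝ) 1) // MeasurableSet A} =>
          |((iterK P n x) A).toReal - (unif01 A).toReal|) := by
        refine ⟨2, ?_⟩
        rintro r ⟨⟨A, hA⟩, rfl⟩
        have h1 : ((iterK P n x) A).toReal ≤ 1 := by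
          simpa using ENNReal.toReal_mono one_ne_top prob_le_one
        have h2 : (unif01 A).toReal ≤ 1 := by
          simpa using ENNReal.toReal_mono one_ne_top prob_le_one
        have h3 : (0 : ℝ) ≤ ((iterK P n x) A).toReal := ENNReal.toReal_nonneg
        have h4 : (0 : ℝ) ≤ (unif01 A).toReal := ENNReal.toReal_nonneg
        rw [abs_le]
        constructor <;> linarith
      have hterm : (1 / 4 : ℝ) ≤ |((iterK P n x) T).toReal - (unif01 T).toReal| := by
        rw [hTnull]
        simp only [ENNReal.toReal_zero, sub_zero]
        rw [abs_of_nonneg ENNReal.toReal_nonneg]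
        have := ENNReal.toReal_mono (measure_ne_top _ _) hTn
        rwa [hc14, ENNReal.toReal_ofReal (by norm_num)] at this
      exact le_trans hterm (le_ciSup hbdd ⟨T, hTmeas⟩)
    have hev := hT (Iio_mem_nhds (show (0 : ℝ) < 1 / 4 by norm_num))
    have hev' : ∀ᶠ n in atTop, tvDist (iterK P n x) unif01 < 1 / 4 := hev
    obtain ⟨n, hn⟩ := hev'.exists
    exact absurd (htv n) (not_le.mpr hn)
end

section
/- Every ϕ-irreducible full-dimensional Metropolis–Hastings algorithm is Harris recurrent. That is: let X be a state space with σ-algebra F, ν a reference measure, f: X → (0, ∞) with ∫_X f dν < ∞, and π(A) = ∫_A f dν / ∫_X f dν; assume π{x} < 1 for all x ∈ X. Let q: X × X → [0, ∞) be jointly measurable with ∫ q(x, y) ν(dy) = 1 for all x, and let α(x, y) = min[1, f(y)q(y,x)/(f(x)q(x,y))] (with α(x, y) = 1 if f(x)q(x,y) = 0). Consider the Markov chain that, from X_n, proposes Y_{n+1} with density q(X_n, ·) with respect to ν, sets X_{n+1} = Y_{n+1} with probability α(X_n, Y_{n+1}), and otherwise sets X_{n+1} = X_n. If this chain is ϕ-irreducible,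 then for every A ∈ F with π(A) > 0 and every x ∈ X, P(τ_A < ∞ | X_0 = x) = 1. -/
open MeasureTheory ProbabilityTheory Filter Set ENNReal

open MCMCHarris MeasureTheory ProbabilityTheory Filter Set ENNReal

namespace MCMCHarris

/-- The Metropolis–Hastings acceptance probability
`α(x,y) = min(1, f(y)q(y,x) / (f(x)q(x,y)))`, set to `1` when `f(x)q(x,y) = 0`. -/
noncomputable def mhAlpha {X : Type*} (f : X → ℝ) (q : X → X → ℝ) (x y : X) : ℝ :=
  if f x * q x y = 0 then 1 else min 1 (f y * q y x / (f x * q x y))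

end MCMCHarris

namespace MCMCHarris

variable {X : Type*} [MeasurableSpace X]

set_option linter.unusedSectionVars false

section basic

variable (P : Kernel X X) [IsMarkovKernel P] {A : Set X}

lemma isMarkovKernel_iterK (n : ℕ) : IsMarkovKernel (iterK P n) := by
  induction n with
  | zero => rw [iterK]; infer_instance
  | succ n ih => rw [iterK]; exact @Kernel.IsMarkovKernel.comp _ _ _ _ _ _ _ ih _ ‹_›

instance (n : ℕ) : IsMarkovKernel (iterK P n) := isMarkovKernel_iterK P n

lemma iterK_zero_apply (x : X) : iterK P 0 x = Measure.dirac x := by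
  simp [iterK, Kernel.id_apply]

lemma iterK_succ_apply (n : ℕ) (x : X) : iterK P (n + 1) x = (P x).bind (iterK P n) := by
  rw [iterK, Kernel.comp_apply]

lemma measurable_hitLE (hA : MeasurableSet A) (n : ℕ) : Measurable (hitLE P A n) := by
  induction n with
  | zero => simp only [hitLE]; exact measurable_const
  | succ n ih =>
    rw [hitLE]
    exact Measurable.lintegral_kernel_prod_right
      (((measurable_const.indicator hA).comp measurable_snd).add
        ((ih.indicator hA.compl).comp measurable_snd))

lemma hitLE_le_one (n : ℕ) (x : X) : hitLE P A n x ≤ 1 := by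
  induction n generalizing x with
  | zero => simp [hitLE]
  | succ n ih =>
    rw [hitLE]
    calc ∫⁻ y, (A.indicator (fun _ => 1) y + Aᶜ.indicator (hitLE P A n) y) ∂(P x)
        ≤ ∫⁻ _, 1 ∂(P x) := by
          refine lintegral_mono fun y => ?_
          by_cases hy : y ∈ A
          · simp [Set.indicator_apply, hy]
          · simpa [Set.indicator_apply, hy] using ih y
      _ = 1 := by simp

lemma hitLE_mono (n : ℕ) (x : X) : hitLE P A n x ≤ hitLE P A (n + 1) x := by
  induction n generalizing x with
  | zero => simp [hitLE]
  | succ n ih =>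
    rw [hitLE, hitLE]
    refine lintegral_mono fun y => add_le_add le_rfl ?_
    by_cases hy : y ∈ Aᶜ <;> simp [hy, ih]

lemma hitLE_mono' : Monotone fun n => hitLE P A n := by
  refine monotone_nat_of_le_succ fun n x => hitLE_mono P n x

lemma hitProb_le_one (x : X) : hitProb P A x ≤ 1 :=
  iSup_le fun n => hitLE_le_one P n x

lemma measurable_hitProb (hA : MeasurableSet A) : Measurable (hitProb P A) :=
  Measurable.iSup fun n => measurable_hitLE P hA n

/-- fixed point equation -/
lemma hitProb_eq (hA : MeasurableSet A) (x : X) :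
    hitProb P A x = ∫⁻ y, (A.indicator (fun _ => 1) y + Aᶜ.indicator (hitProb P A) y) ∂(P x) := by
  have h1 : hitProb P A x = ⨆ n, hitLE P A (n + 1) x := by
    refine le_antisymm (iSup_le fun n => ?_) (iSup_le fun n => le_iSup (fun n => hitLE P A n x) (n + 1))
    exact le_iSup_of_le n (hitLE_mono P n x)
  rw [h1]
  simp only [hitLE]
  rw [← lintegral_iSup]
  · congr 1
    funext y
    by_cases hy : y ∈ A
    · simp [Set.indicator_apply, hy]
    · simp [Set.indicator_apply, hy, hitProb]
  · intro n
    exact (measurable_const.indicator hA).add ((measurable_hitLE P hA n).indicator hA.compl)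
  · intro n m hnm y
    exact add_le_add le_rfl (by
      by_cases hy : y ∈ Aᶜ
      · simpa [Set.indicator_of_mem hy] using hitLE_mono' P hnm y
      · simp [Set.indicator_of_notMem hy])

lemma hitProb_empty (x : X) : hitProb P (∅ : Set X) x = 0 := by
  have h : ∀ n x, hitLE P (∅ : Set X) n x = 0 := by
    intro n
    induction n with
    | zero => intro x; simp [hitLE]
    | succ n ih => intro x; simp [hitLE, ih]
  simp [hitProb, h]

lemma bind_dirac_eq (μ : Measure X) : μ.bind Measure.dirac = μ := Measure.bind_dirac

lemma iterK_one_apply (x : X) : iterK P 1 x = P x := by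
  rw [iterK_succ_apply]
  have h : ⇑(iterK P 0) = Measure.dirac := funext (iterK_zero_apply P)
  rw [h]
  exact Measure.bind_dirac

lemma hitLE_eq_zero_of_powers (hB : MeasurableSet A) :
    ∀ n, ∀ z, (∀ m, iterK P (m + 1) z A = 0) → hitLE P A n z = 0 := by
  intro n
  induction n with
  | zero => intro z _; simp [hitLE]
  | succ n ih =>
    intro z hz
    simp only [hitLE]
    have h1 : P z A = 0 := by rw [← iterK_one_apply P z]; exact hz 0
    have h2 : ∀ᵐ y ∂(P z), ∀ m, iterK P (m + 1) y A = 0 := by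
      rw [ae_all_iff]
      intro m
      have h3 : ∫⁻ y, iterK P (m + 1) y A ∂(P z) = 0 := by
        have := hz (m + 1)
        rwa [iterK_succ_apply, Measure.bind_apply hB (Kernel.measurable (iterK P (m+1))).aemeasurable] at this
      have h4 := (lintegral_eq_zero_iff (Kernel.measurable_coe (iterK P (m+1)) hB)).mp h3
      exact h4
    have h5 : ∀ᵐ y ∂(P z),
        A.indicator (fun _ => (1 : ℝ≥0∞)) y + Aᶜ.indicator (hitLE P A n) y = 0 := by
      have h6 : ∀ᵐ y ∂(P z), y ∉ A := by
        rw [ae_iff]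
        simpa [hB] using h1
      filter_upwards [h2, h6] with y hy hyA
      simp [Set.indicator_of_notMem hyA, Set.indicator_apply, hyA, ih y hy]
    rw [lintegral_congr_ae h5]
    simp

lemma hitProb_eq_zero_of_powers (hB : MeasurableSet A) (z : X)
    (hz : ∀ m, iterK P (m + 1) z A = 0) : hitProb P A z = 0 := by
  simp [hitProb, fun n => hitLE_eq_zero_of_powers P hB n z hz]

lemma hitProb_of_dirac {B : Set X} (hB' : MeasurableSet B) (x : X) (hx : P x = Measure.dirac x) :
    hitProb P B x = B.indicator (fun _ => 1) x := by
  have key : ∀ n, hitLE P B (n + 1) x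
      = B.indicator (fun _ => 1) x + Bᶜ.indicator (hitLE P B n) x := by
    intro n
    simp only [hitLE, hx]
    exact lintegral_dirac' x ((measurable_const.indicator hB').add
      ((measurable_hitLE P hB' n).indicator hB'.compl))
  have h : ∀ n, hitLE P B (n + 1) x = B.indicator (fun _ => 1) x := by
    intro n
    induction n with
    | zero => rw [key]; simp [hitLE]
    | succ n ih =>
      rw [key]
      by_cases hxB : x ∈ B
      · simp [Set.indicator_apply, hxB]
      · simpa [Set.indicator_apply, hxB] using ih
  refine le_antisymm (iSup_le fun n => ?_) ?_
  · cases n with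
    | zero => simp [hitLE]
    | succ n => exact le_of_eq (h n)
  · rw [← h 0]; exact le_iSup (fun n => hitLE P B n x) 1

/-- comparison for quasi-absorbing sets -/
lemma hitLE_le_inter {C D S : Set X} (hC : MeasurableSet C) (hD : MeasurableSet D)
    (hS : MeasurableSet S) (hDS : D ⊆ S) (habs : ∀ z ∈ S, P z D = 1) :
    ∀ n, ∀ z ∈ S, hitLE P C n z ≤ hitLE P (C ∩ D) n z := by
  intro n
  induction n with
  | zero => intro z _; simp [hitLE]
  | succ n ih =>
    intro z hz
    simp only [hitLE]
    have hae : ∀ᵐ y ∂(P z), y ∈ D := by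
      rw [ae_iff]
      have : P z Dᶜ = 0 := by
        have h1 : P z D = 1 := habs z hz
        have := measure_compl hD (measure_ne_top (P z) D)
        rw [h1] at this
        simpa using this
      exact this
    refine lintegral_mono_ae ?_
    filter_upwards [hae] with y hyD
    by_cases hyC : y ∈ C
    · simp [Set.indicator_apply, hyC, hyD]
    · have hyCD : y ∉ C ∩ D := fun h => hyC h.1
      simpa [Set.indicator_apply, hyC, hyCD] using ih y (hDS hyD)

lemma hitProb_le_inter {C D S : Set X} (hC : MeasurableSet C) (hD : MeasurableSet D)
    (hS : MeasurableSet S) (hDS : D ⊆ S) (habs : ∀ z ∈ S, P z D = 1) (z : X) (hz : z ∈ S) :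
    hitProb P C z ≤ hitProb P (C ∩ D) z :=
  iSup_mono fun n => hitLE_le_inter P hC hD hS hDS habs n z hz

/-- transfer stationarity to integrals -/
lemma lintegral_stationary (π : Measure X)
    (hstat : ∀ E : Set X, MeasurableSet E → ∫⁻ x, P x E ∂π = π E)
    {g : X → ℝ≥0∞} (hg : Measurable g) :
    ∫⁻ x, ∫⁻ y, g y ∂P x ∂π = ∫⁻ y, g y ∂π := by
  have hbind : π.bind ⇑P = π := by
    ext E hE
    rw [Measure.bind_apply hE (Kernel.measurable P).aemeasurable]
    exact hstat E hE
  conv_rhs => rw [← hbind]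
  rw [Measure.lintegral_bind (Kernel.measurable P).aemeasurable hg.aemeasurable]

end basic

section MH

variable {f : X → ℝ} {q : X → X → ℝ}

lemma mhAlpha_nonneg (hf_pos : ∀ x, 0 < f x) (hq_nonneg : ∀ x y, 0 ≤ q x y) (x y : X) :
    0 ≤ mhAlpha f q x y := by
  unfold mhAlpha
  split_ifs with h
  · norm_num
  · have hb : 0 < f x * q x y :=
      lt_of_le_of_ne (mul_nonneg (hf_pos x).le (hq_nonneg x y)) (Ne.symm h)
    exact le_min zero_le_one (div_nonneg (mul_nonneg (hf_pos y).le (hq_nonneg y x)) hb.le)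

lemma mhAlpha_le_one (x y : X) : mhAlpha f q x y ≤ 1 := by
  unfold mhAlpha
  split_ifs with h
  · exact le_refl 1
  · exact min_le_left _ _

lemma mhAlpha_key (hf_pos : ∀ x, 0 < f x) (hq_nonneg : ∀ x y, 0 ≤ q x y) (x y : X) :
    f x * (q x y * mhAlpha f q x y) = min (f x * q x y) (f y * q y x) := by
  unfold mhAlpha
  by_cases h0 : f x * q x y = 0
  · rw [if_pos h0]
    have hq0 : q x y = 0 := by
      rcases mul_eq_zero.mp h0 with h | h
      · exact absurd h (hf_pos x).ne'
      · exact h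
    simp [hq0, min_eq_left (mul_nonneg (hf_pos y).le (hq_nonneg y x))]
  · rw [if_neg h0]
    have hb : 0 < f x * q x y :=
      lt_of_le_of_ne (mul_nonneg (hf_pos x).le (hq_nonneg x y)) (Ne.symm h0)
    rw [← mul_assoc, mul_min_of_nonneg _ _ hb.le, mul_one,
      mul_div_cancel₀ _ hb.ne']

lemma measurable_mhAlpha (hf_meas : Measurable f) (hq_meas : Measurable (Function.uncurry q)) :
    Measurable (fun p : X × X => mhAlpha f q p.1 p.2) := by
  have h1 : Measurable fun p : X × X => f p.1 * q p.1 p.2 :=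
    (hf_meas.comp measurable_fst).mul hq_meas
  have h2 : Measurable fun p : X × X => f p.2 * q p.2 p.1 :=
    (hf_meas.comp measurable_snd).mul (hq_meas.comp measurable_swap)
  unfold mhAlpha
  exact Measurable.ite (h1 (measurableSet_singleton 0)) measurable_const
    (measurable_const.min (h2.div h1))

/-- the sub-probability density of the MH kernel -/
noncomputable def mhDens (f : X → ℝ) (q : X → X → ℝ) (x y : X) : ℝ≥0∞ :=
  ENNReal.ofReal (q x y * mhAlpha f q x y)

/-- the total acceptance probability from `x` -/
noncomputable def mhAcc (ν : Measure X) (f : X → ℝ) (q : X → X → ℝ) (x : X) : ℝ≥0∞ :=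
  ∫⁻ y, mhDens f q x y ∂ν

lemma measurable_mhDens (hf_meas : Measurable f) (hq_meas : Measurable (Function.uncurry q)) :
    Measurable (fun p : X × X => mhDens f q p.1 p.2) :=
  (hq_meas.mul (measurable_mhAlpha hf_meas hq_meas)).ennreal_ofReal

lemma measurable_mhDens_right (hf_meas : Measurable f) (hq_meas : Measurable (Function.uncurry q))
    (x : X) : Measurable (mhDens f q x) :=
  (measurable_mhDens hf_meas hq_meas).comp measurable_prodMk_left

lemma measurable_mhAcc (ν : Measure X) [SigmaFinite ν] (hf_meas : Measurable f)
    (hq_meas : Measurable (Function.uncurry q)) : Measurable (mhAcc ν f q) :=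
  Measurable.lintegral_prod_right (f := fun x y => mhDens f q x y)
    (by exact measurable_mhDens hf_meas hq_meas)

lemma mhAcc_le_one (ν : Measure X) (hf_pos : ∀ x, 0 < f x) (hq_nonneg : ∀ x y, 0 ≤ q x y)
    (hq_int : ∀ x, ∫⁻ y, ENNReal.ofReal (q x y) ∂ν = 1) (x : X) : mhAcc ν f q x ≤ 1 := by
  rw [← hq_int x]
  refine lintegral_mono fun y => ?_
  exact ENNReal.ofReal_le_ofReal
    (mul_le_of_le_one_right (hq_nonneg x y) (mhAlpha_le_one x y))

end MH

section MHkernel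

variable {ν : Measure X} [SigmaFinite ν] {f : X → ℝ} {q : X → X → ℝ}
  {P : Kernel X X} [IsMarkovKernel P]

lemma mh_decomp
    (hP : ∀ x, ∀ A : Set X, MeasurableSet A →
      P x A = (∫⁻ y in A, ENNReal.ofReal (q x y * mhAlpha f q x y) ∂ν) +
        (1 - ∫⁻ y, ENNReal.ofReal (q x y * mhAlpha f q x y) ∂ν) * A.indicator 1 x)
    (x : X) :
    P x = ν.withDensity (mhDens f q x) + (1 - mhAcc ν f q x) • Measure.dirac x := by
  ext E hE
  rw [hP x E hE, Measure.add_apply, Measure.smul_apply, withDensity_apply _ hE,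
    Measure.dirac_apply' _ hE, smul_eq_mul]
  rfl

lemma mh_null (hf_meas : Measurable f) (hq_meas : Measurable (Function.uncurry q))
    (hP : ∀ x, ∀ A : Set X, MeasurableSet A →
      P x A = (∫⁻ y in A, ENNReal.ofReal (q x y * mhAlpha f q x y) ∂ν) +
        (1 - ∫⁻ y, ENNReal.ofReal (q x y * mhAlpha f q x y) ∂ν) * A.indicator 1 x)
    {N : Set X} (hN : MeasurableSet N) (hνN : ν N = 0) :
    ∀ x, x ∉ N → P x N = 0 := by
  intro x hx
  rw [hP x N hN]
  rw [setLIntegral_measure_zero N _ hνN]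
  simp [Set.indicator_of_notMem hx]

/-- stationarity of π for the MH chain -/
lemma mh_stationary (hf_meas : Measurable f) (hf_pos : ∀ x, 0 < f x)
    (hq_meas : Measurable (Function.uncurry q)) (hq_nonneg : ∀ x y, 0 ≤ q x y)
    (hq_int : ∀ x, ∫⁻ y, ENNReal.ofReal (q x y) ∂ν = 1)
    (hP : ∀ x, ∀ A : Set X, MeasurableSet A →
      P x A = (∫⁻ y in A, ENNReal.ofReal (q x y * mhAlpha f q x y) ∂ν) +
        (1 - ∫⁻ y, ENNReal.ofReal (q x y * mhAlpha f q x y) ∂ν) * A.indicator 1 x)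
    {E : Set X} (hE : MeasurableSet E) :
    ∫⁻ x, P x E ∂(ν.withDensity (fun x => ENNReal.ofReal (f x)))
      = (ν.withDensity (fun x => ENNReal.ofReal (f x))) E := by
  set ftil : X → ℝ≥0∞ := fun x => ENNReal.ofReal (f x) with hftil
  have hftil_meas : Measurable ftil := hf_meas.ennreal_ofReal
  have hdens := measurable_mhDens (f := f) (q := q) hf_meas hq_meas
  have hdens_right := fun x => measurable_mhDens_right (f := f) (q := q) hf_meas hq_meas x
  have hacc := measurable_mhAcc (f := f) (q := q) ν hf_meas hq_meas
  have hacc_le := fun x => mhAcc_le_one (f := f) (q := q) ν hf_pos hq_nonneg hq_int x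
  -- the symmetric min function
  set M : X → X → ℝ≥0∞ := fun x y => ENNReal.ofReal (min (f x * q x y) (f y * q y x)) with hM
  have hM_meas : Measurable (Function.uncurry M) := by
    refine Measurable.ennreal_ofReal (Measurable.min ?_ ?_)
    · exact (hf_meas.comp measurable_fst).mul hq_meas
    · exact (hf_meas.comp measurable_snd).mul (hq_meas.comp measurable_swap)
  have hMkey : ∀ x y, ftil x * mhDens f q x y = M x y := by
    intro x y
    rw [hftil, hM, mhDens, ← ENNReal.ofReal_mul (hf_pos x).le, mhAlpha_key hf_pos hq_nonneg]
  have hMsymm : ∀ x y, M x y = M y x := by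
    intro x y; rw [hM]; simp only; rw [min_comm]
  -- measurable P·E
  have hPE : Measurable fun x => P x E := Kernel.measurable_coe P hE
  rw [lintegral_withDensity_eq_lintegral_mul ν hftil_meas hPE]
  -- pointwise formula
  have hpt : ∀ x, (ftil * fun x => P x E) x
      = (∫⁻ y, E.indicator (fun _ => (1:ℝ≥0∞)) y * M x y ∂ν)
        + ftil x * ((1 - mhAcc ν f q x) * E.indicator 1 x) := by
    intro x
    simp only [Pi.mul_apply]
    rw [hP x E hE, mul_add]
    congr 1
    have h1 : ∫⁻ y in E, ENNReal.ofReal (q x y * mhAlpha f q x y) ∂ν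
        = ∫⁻ y, E.indicator (mhDens f q x) y ∂ν := by
      rw [lintegral_indicator hE]
      rfl
    rw [h1, ← lintegral_const_mul _ ((hdens_right x).indicator hE)]
    congr 1
    funext y
    by_cases hy : y ∈ E
    · simp [Set.indicator_of_mem hy, hMkey x y]
    · simp [Set.indicator_of_notMem hy]
  rw [lintegral_congr hpt]
  rw [lintegral_add_left]
  swap
  · exact Measurable.lintegral_prod_right
      (f := fun x y => E.indicator (fun _ => (1:ℝ≥0∞)) y * M x y)
      (((measurable_const.indicator hE).comp measurable_snd).mul hM_meas)
  -- Tonelli on the first term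
  have hswap : ∫⁻ x, ∫⁻ y, E.indicator (fun _ => (1:ℝ≥0∞)) y * M x y ∂ν ∂ν
      = ∫⁻ y, ∫⁻ x, E.indicator (fun _ => (1:ℝ≥0∞)) y * M x y ∂ν ∂ν := by
    refine lintegral_lintegral_swap ?_
    exact (((measurable_const.indicator hE).comp measurable_snd).mul hM_meas).aemeasurable
  rw [hswap]
  have hinner : ∀ y, ∫⁻ x, E.indicator (fun _ => (1:ℝ≥0∞)) y * M x y ∂ν
      = E.indicator (fun _ => (1:ℝ≥0∞)) y * (ftil y * mhAcc ν f q y) := by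
    intro y
    rw [lintegral_const_mul']
    swap
    · by_cases hy : y ∈ E <;> simp [Set.indicator_apply, hy]
    congr 1
    calc ∫⁻ x, M x y ∂ν = ∫⁻ x, ftil y * mhDens f q y x ∂ν := by
          refine lintegral_congr fun x => ?_
          rw [hMsymm x y, hMkey y x]
      _ = ftil y * mhAcc ν f q y := by
          rw [lintegral_const_mul _ (hdens_right y)]
          rfl
  rw [lintegral_congr hinner]
  -- second term
  have hsecond : ∀ x, ftil x * ((1 - mhAcc ν f q x) * E.indicator 1 x)
      = E.indicator (fun _ => (1:ℝ≥0∞)) x * (ftil x * (1 - mhAcc ν f q x)) := by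
    intro x
    by_cases hx : x ∈ E <;> simp [Set.indicator_apply, hx] <;> ring
  rw [lintegral_congr hsecond]
  rw [← lintegral_add_right]
  swap
  · exact ((measurable_const.indicator hE).mul (hftil_meas.mul (measurable_const.sub hacc)))
  have hfinal : ∀ y, E.indicator (fun _ => (1:ℝ≥0∞)) y * (ftil y * mhAcc ν f q y)
      + E.indicator (fun _ => (1:ℝ≥0∞)) y * (ftil y * (1 - mhAcc ν f q y))
      = E.indicator ftil y := by
    intro y
    by_cases hy : y ∈ E
    · simp only [Set.indicator_of_mem hy, one_mul]
      rw [← mul_add]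
      rw [add_tsub_cancel_of_le (hacc_le y), mul_one]
    · simp [Set.indicator_of_notMem hy]
  rw [lintegral_congr hfinal, lintegral_indicator hE, withDensity_apply _ hE]

end MHkernel

section irred

variable (P : Kernel X X) [IsMarkovKernel P]

/-- An irreducible chain with stationary distribution `π` whose kernel does not move
ν-null sets (except trivially) is `π`-irreducible. -/
lemma pi_irreducible (π ν : Measure X) [IsProbabilityMeasure π]
    (hstat : ∀ E : Set X, MeasurableSet E → ∫⁻ x, P x E ∂π = π E)
    (hnull : ∀ N : Set X, MeasurableSet N → ν N = 0 → ∀ x, x ∉ N → P x N = 0)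
    (hπν : ∀ E : Set X, MeasurableSet E → π E = 0 → ν E = 0)
    (φ : Measure X) (hφ : φ ≠ 0)
    (hirr : ∀ x : X, ∀ A : Set X, MeasurableSet A → 0 < φ A → 0 < hitProb P A x)
    {B : Set X} (hB : MeasurableSet B) (hπB : 0 < π B) :
    ∀ z : X, 0 < hitProb P B z := by
  by_contra hcon
  push_neg at hcon
  obtain ⟨z₀, hz₀⟩ := hcon
  have hz₀' : hitProb P B z₀ = 0 := le_antisymm hz₀ zero_le
  set R : Set X := {z | 0 < hitProb P B z} with hRdef
  have hRmeas : MeasurableSet R := measurableSet_lt measurable_const (measurable_hitProb P hB)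
  set D : Set X := Rᶜ ∩ Bᶜ with hDdef
  have hDmeas : MeasurableSet D := hRmeas.compl.inter hB.compl
  have hDR : D ⊆ Rᶜ := Set.inter_subset_left
  have hBD : B ⊆ Dᶜ := by
    intro z hz hzD
    exact hzD.2 hz
  -- step 1
  have step1 : ∀ z ∈ Rᶜ, P z D = 1 := by
    intro z hz
    have hz' : hitProb P B z = 0 := by
      by_contra h
      exact hz (pos_iff_ne_zero.mpr h)
    have h0 : ∫⁻ y, (B.indicator (fun _ => 1) y + Bᶜ.indicator (hitProb P B) y) ∂(P z) = 0 :=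
      (hitProb_eq P hB z).symm.trans hz'
    have hmeas0 : Measurable fun y =>
        B.indicator (fun _ => (1:ℝ≥0∞)) y + Bᶜ.indicator (hitProb P B) y :=
      (measurable_const.indicator hB).add ((measurable_hitProb P hB).indicator hB.compl)
    have hae := (lintegral_eq_zero_iff hmeas0).mp h0
    have hae2 : ∀ᵐ y ∂(P z), y ∈ D := by
      filter_upwards [hae] with y hy
      rcases add_eq_zero.mp hy with ⟨hy1, hy2⟩
      have hyB : y ∉ B := by
        intro h
        rw [Set.indicator_of_mem h] at hy1
        exact one_ne_zero hy1
      refine ⟨?_, hyB⟩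
      rw [Set.indicator_of_mem (Set.mem_compl hyB)] at hy2
      intro h
      exact (pos_iff_ne_zero.mp h) hy2
    refine (prob_compl_eq_zero_iff hDmeas).mp ?_
    exact ae_iff.mp hae2
  have hz₀R : z₀ ∈ Rᶜ := fun h => (pos_iff_ne_zero.mp h) hz₀'
  -- step 2
  have step2 : φ Dᶜ = 0 := by
    by_contra h
    have hpos : 0 < φ Dᶜ := pos_iff_ne_zero.mpr h
    have h1 := hirr z₀ Dᶜ hDmeas.compl hpos
    have h2 : hitProb P Dᶜ z₀ ≤ hitProb P (Dᶜ ∩ D) z₀ :=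
      hitProb_le_inter P hDmeas.compl hDmeas hRmeas.compl hDR step1 z₀ hz₀R
    rw [Set.compl_inter_self, hitProb_empty] at h2
    exact absurd (lt_of_lt_of_le h1 h2) (lt_irrefl 0)
  have hφD : 0 < φ D := by
    have huniv : φ Set.univ ≠ 0 := fun h => hφ (Measure.measure_univ_eq_zero.mp h)
    have : φ Set.univ ≤ φ D + φ Dᶜ := by
      rw [← Set.union_compl_self D] at huniv ⊢
      exact measure_union_le D Dᶜ
    rw [step2, add_zero] at this
    exact pos_iff_ne_zero.mpr fun h => huniv (le_antisymm (h ▸ this) zero_le)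
  -- step 3: leak set
  have h5 : ∫⁻ z, P z D ∂π = π D := hstat D hDmeas
  have h6 : ∫⁻ z in D, P z D ∂π = π D := by
    have : ∫⁻ z in D, P z D ∂π = ∫⁻ _ in D, 1 ∂π :=
      setLIntegral_congr_fun hDmeas (fun z hz => step1 z (hDR hz))
    rw [this]
    simp
  have h7 : ∫⁻ z in Dᶜ, P z D ∂π = 0 := by
    have hsplit := lintegral_add_compl (fun z => P z D) hDmeas (μ := π)
    rw [h5, h6] at hsplit
    have hfin : π D ≠ ⊤ := measure_ne_top π D
    nth_rewrite 2 [← add_zero (π D)] at hsplit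
    exact (ENNReal.add_right_inj hfin).mp hsplit
  set L : Set X := {z | P z D ≠ 0} ∩ Dᶜ with hLdef
  have hLmeas : MeasurableSet L :=
    (((Kernel.measurable_coe P hDmeas) (measurableSet_singleton 0)).compl).inter hDmeas.compl
  have hπL : π L = 0 := by
    have hae := (lintegral_eq_zero_iff (Kernel.measurable_coe P hDmeas)).mp h7
    have hae' : ∀ᵐ z ∂(π.restrict Dᶜ), P z D = 0 := by
      filter_upwards [hae] with z hz using hz
    have h8 := ae_iff.mp hae'
    have hmeas2 : MeasurableSet {z : X | ¬ (P z D = 0)} :=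
      ((Kernel.measurable_coe P hDmeas) (measurableSet_singleton 0)).compl
    rw [Measure.restrict_apply hmeas2] at h8
    exact h8
  have hνL : ν L = 0 := hπν L hLmeas hπL
  -- step 5: no path from Dᶜ \ L into D
  have step5 : ∀ m, ∀ z, z ∈ Dᶜ → z ∉ L → iterK P (m + 1) z D = 0 := by
    intro m
    induction m with
    | zero =>
      intro z hz hzL
      rw [iterK_one_apply]
      by_contra h
      exact hzL ⟨h, hz⟩
    | succ m ih =>
      intro z hz hzL
      have hPzD : P z D = 0 := by
        by_contra h
        exact hzL ⟨h, hz⟩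
      rw [iterK_succ_apply, Measure.bind_apply hDmeas (Kernel.measurable _).aemeasurable]
      have hae1 : ∀ᵐ y ∂(P z), y ∈ Dᶜ := by
        rw [ae_iff]
        simpa using hPzD
      have hae2 : ∀ᵐ y ∂(P z), y ∉ L := by
        rw [ae_iff]
        have := hnull L hLmeas hνL z hzL
        simpa using this
      rw [lintegral_eq_zero_iff (Kernel.measurable_coe _ hDmeas)]
      filter_upwards [hae1, hae2] with y hy1 hy2
      exact ih y hy1 hy2
  -- step 6: contradiction
  have hπBL : π (B \ L) = π B := measure_diff_null hπL
  have hBL : (B \ L).Nonempty := by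
    refine nonempty_of_measure_ne_zero (μ := π) ?_
    rw [hπBL]
    exact hπB.ne'
  obtain ⟨z₁, hz₁B, hz₁L⟩ := hBL
  have hz₁D : z₁ ∈ Dᶜ := hBD hz₁B
  have hzero : hitProb P D z₁ = 0 :=
    hitProb_eq_zero_of_powers P hDmeas z₁ (fun m => step5 m z₁ hz₁D hz₁L)
  have hposD := hirr z₁ D hDmeas hφD
  rw [hzero] at hposD
  exact lt_irrefl 0 hposD

/-- For a π-stationary chain that is φ-irreducible and does not move ν-null sets,
the hitting probability of any π-positive set is 1 from π-a.e. starting point. -/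
lemma hitProb_ae_one (π ν : Measure X) [IsProbabilityMeasure π]
    (hstat : ∀ E : Set X, MeasurableSet E → ∫⁻ x, P x E ∂π = π E)
    (hnull : ∀ N : Set X, MeasurableSet N → ν N = 0 → ∀ x, x ∉ N → P x N = 0)
    (hπν : ∀ E : Set X, MeasurableSet E → π E = 0 → ν E = 0)
    (φ : Measure X) (hφ : φ ≠ 0)
    (hirr : ∀ x : X, ∀ A : Set X, MeasurableSet A → 0 < φ A → 0 < hitProb P A x)
    {A : Set X} (hA : MeasurableSet A) (hπA : 0 < π A) :
    π {z | hitProb P A z < 1} = 0 := by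
  set g : X → ℝ≥0∞ := hitProb P A with hgdef
  have hg : Measurable g := measurable_hitProb P hA
  have hg1 : ∀ z, g z ≤ 1 := fun z => hitProb_le_one P z
  set g' : X → ℝ≥0∞ := fun y => A.indicator (fun _ => 1) y + Aᶜ.indicator g y with hg'def
  have hg' : Measurable g' :=
    (measurable_const.indicator hA).add (hg.indicator hA.compl)
  have hgg' : ∀ y, g y ≤ g' y := by
    intro y
    rw [hg'def]
    by_cases hy : y ∈ A
    · simpa [Set.indicator_apply, hy] using hg1 y
    · simp [Set.indicator_apply, hy]
  have hfix : ∀ x, g x = ∫⁻ y, g' y ∂(P x) := fun x => hitProb_eq P hA x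
  -- π A = ∫_A g
  have e1 : ∫⁻ z, g z ∂π = ∫⁻ z, g' z ∂π := by
    rw [lintegral_congr hfix]
    exact lintegral_stationary P π hstat hg'
  have e2 : ∫⁻ z, g' z ∂π = π A + ∫⁻ z in Aᶜ, g z ∂π := by
    rw [hg'def, lintegral_add_left (measurable_const.indicator hA),
      lintegral_indicator hA, lintegral_indicator hA.compl]
    simp
  have e3 : ∫⁻ z, g z ∂π = ∫⁻ z in A, g z ∂π + ∫⁻ z in Aᶜ, g z ∂π :=
    (lintegral_add_compl g hA).symm
  have hfinc : ∫⁻ z in Aᶜ, g z ∂π ≠ ⊤ := by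
    refine ne_top_of_le_ne_top (b := 1) one_ne_top ?_
    calc ∫⁻ z in Aᶜ, g z ∂π ≤ ∫⁻ _ in Aᶜ, 1 ∂π := lintegral_mono fun z => hg1 z
      _ = π Aᶜ := by simp
      _ ≤ 1 := prob_le_one
  have e4 : ∫⁻ z in A, g z ∂π = π A := by
    have := e3.symm.trans (e1.trans e2)
    exact (ENNReal.add_left_inj hfinc).mp this
  -- g = 1 a.e. on A
  have hfinA : ∫⁻ z in A, g z ∂π ≠ ⊤ := by
    rw [e4]; exact measure_ne_top π A
  have aeA : ∀ᵐ z ∂π, z ∈ A → g z = 1 := by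
    have hsub : ∫⁻ z in A, (1 - g z) ∂π = 0 := by
      rw [lintegral_sub hg hfinA (ae_of_all _ fun z => hg1 z)]
      rw [e4]
      simp [tsub_self]
    have hae0 := (lintegral_eq_zero_iff (measurable_const.sub hg)).mp hsub
    have hae0' : ∀ᵐ z ∂(π.restrict A), 1 - g z = 0 := by
      filter_upwards [hae0] with z hz using hz
    rw [ae_restrict_iff' hA] at hae0'
    filter_upwards [hae0'] with z hz hzA
    have := hz hzA
    exact le_antisymm (hg1 z) (tsub_eq_zero_iff_le.mp this)
  -- g is a.e. harmonic
  set Pg : X → ℝ≥0∞ := fun z => ∫⁻ y, g y ∂(P z) with hPgdef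
  have hPg_meas : Measurable Pg :=
    Measurable.lintegral_kernel_prod_right (f := fun _ y => g y) (hg.comp measurable_snd)
  have hPg_le : ∀ z, Pg z ≤ g z := by
    intro z
    rw [hfix z]
    exact lintegral_mono fun y => hgg' y
  have ePg : ∫⁻ z, Pg z ∂π = ∫⁻ z, g z ∂π := lintegral_stationary P π hstat hg
  have hfing : ∫⁻ z, g z ∂π ≠ ⊤ := by
    refine ne_top_of_le_ne_top (b := 1) one_ne_top ?_
    calc ∫⁻ z, g z ∂π ≤ ∫⁻ _, 1 ∂π := lintegral_mono fun z => hg1 z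
      _ ≤ 1 := by simp
  have aeP : ∀ᵐ z ∂π, Pg z = g z := by
    have hsub : ∫⁻ z, (g z - Pg z) ∂π = 0 := by
      rw [lintegral_sub hPg_meas (ePg.symm ▸ hfing) (ae_of_all _ hPg_le), ePg]
      simp [tsub_self]
    have hae0 := (lintegral_eq_zero_iff (hg.sub hPg_meas)).mp hsub
    filter_upwards [hae0] with z hz
    exact le_antisymm (hPg_le z) (tsub_eq_zero_iff_le.mp hz)
  -- combined bad set
  have haeBoth : ∀ᵐ z ∂π, Pg z = g z ∧ (z ∈ A → g z = 1) := aeP.and aeA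
  obtain ⟨T, hTsub, hTmeas, hTnull⟩ :=
    exists_measurable_superset_of_null (ae_iff.mp haeBoth)
  have hνT : ν T = 0 := hπν T hTmeas hTnull
  have hT_good : ∀ z, z ∉ T → Pg z = g z ∧ (z ∈ A → g z = 1) := by
    intro z hz
    by_contra h
    exact hz (hTsub h)
  -- iterates preserve g off T
  have hprop : ∀ m, ∀ x, x ∉ T → ∫⁻ y, g y ∂(iterK P m x) = g x := by
    intro m
    induction m with
    | zero =>
      intro x hx
      rw [iterK_zero_apply, lintegral_dirac' x hg]
    | succ m ih =>
      intro x hx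
      rw [iterK_succ_apply, Measure.lintegral_bind (Kernel.measurable _).aemeasurable hg.aemeasurable]
      have hae1 : ∀ᵐ y ∂(P x), y ∉ T := by
        rw [ae_iff]
        simpa using hnull T hTmeas hνT x hx
      have : ∫⁻ y, (∫⁻ w, g w ∂(iterK P m y)) ∂(P x) = ∫⁻ y, g y ∂(P x) := by
        refine lintegral_congr_ae ?_
        filter_upwards [hae1] with y hy
        exact ih y hy
      rw [this]
      exact (hT_good x hx).1
  -- each level set is null
  have hlevel : ∀ k : ℕ, π {z | g z ≤ 1 - ((k : ℝ≥0∞) + 1)⁻¹} = 0 := by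
    intro k
    set c : ℝ≥0∞ := ((k : ℝ≥0∞) + 1)⁻¹ with hcdef
    have hc0 : c ≠ 0 := ENNReal.inv_ne_zero.mpr (by simp)
    have hc1 : c ≤ 1 := by
      rw [hcdef]
      exact ENNReal.inv_le_one.mpr (le_add_self.trans (le_refl _)) -- fix maybe
    set Nc : Set X := {z | g z ≤ 1 - c} with hNcdef
    have hNc : MeasurableSet Nc := measurableSet_le hg measurable_const
    by_contra hNpos
    have hreach := pi_irreducible P π ν hstat hnull hπν φ hφ hirr hNc
      (pos_iff_ne_zero.mpr hNpos)
    have hAT : (A \ T).Nonempty := by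
      refine nonempty_of_measure_ne_zero (μ := π) ?_
      rw [measure_diff_null hTnull]
      exact hπA.ne'
    obtain ⟨y, hyA, hyT⟩ := hAT
    have hgy : g y = 1 := (hT_good y hyT).2 hyA
    have hpow : ∀ m, iterK P m y Nc = 0 := by
      intro m
      by_contra hmne
      have hint : ∫⁻ z, g z ∂(iterK P m y) = 1 := by rw [hprop m y hyT, hgy]
      have hle2 : ∀ z, g z ≤ 1 - c * Nc.indicator (fun _ => (1:ℝ≥0∞)) z := by
        intro z
        by_cases hz : z ∈ Nc
        · simpa [Set.indicator_of_mem hz] using (show g z ≤ 1 - c from hz)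
        · simp [Set.indicator_of_notMem hz, hg1 z]
      have hci : Measurable fun z => c * Nc.indicator (fun _ => (1:ℝ≥0∞)) z :=
        measurable_const.mul (measurable_const.indicator hNc)
      have hcfin : ∫⁻ z, c * Nc.indicator (fun _ => (1:ℝ≥0∞)) z ∂(iterK P m y) ≠ ⊤ := by
        rw [lintegral_const_mul _ (measurable_const.indicator hNc), lintegral_indicator hNc]
        exact ENNReal.mul_ne_top (ne_top_of_le_ne_top one_ne_top hc1)
          (by simpa using measure_ne_top _ _)
      have hcval : ∫⁻ z, c * Nc.indicator (fun _ => (1:ℝ≥0∞)) z ∂(iterK P m y)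
          = c * (iterK P m y) Nc := by
        rw [lintegral_const_mul _ (measurable_const.indicator hNc), lintegral_indicator hNc]
        simp
      have hup : (1:ℝ≥0∞) ≤ ∫⁻ z, (1 - c * Nc.indicator (fun _ => (1:ℝ≥0∞)) z) ∂(iterK P m y) := by
        have := lintegral_mono (μ := iterK P m y) hle2
        rwa [hint] at this
      rw [lintegral_sub hci hcfin (ae_of_all _ fun z => by
        by_cases hz : z ∈ Nc
        · simp [Set.indicator_of_mem hz, hc1]
        · simp [Set.indicator_of_notMem hz])] at hup
      rw [hcval] at hup
      simp only [lintegral_one] at hup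
      have huniv : (iterK P m y) Set.univ = 1 := measure_univ
      rw [huniv] at hup
      have hlt : (1:ℝ≥0∞) - c * (iterK P m y) Nc < 1 :=
        ENNReal.sub_lt_self one_ne_top one_ne_zero (mul_ne_zero hc0 hmne)
      exact absurd (lt_of_le_of_lt hup hlt) (lt_irrefl 1)
    have hzero : hitProb P Nc y = 0 :=
      hitProb_eq_zero_of_powers P hNc y (fun m => hpow (m + 1))
    have := hreach y
    rw [hzero] at this
    exact lt_irrefl 0 this
  -- conclude
  have hsub2 : {z | g z < 1} ⊆ ⋃ k : ℕ, {z | g z ≤ 1 - ((k : ℝ≥0∞) + 1)⁻¹} := by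
    intro z hz
    have h1 : (1:ℝ≥0∞) - g z ≠ 0 := by
      simp only [Set.mem_setOf_eq] at hz
      exact (tsub_pos_of_lt hz).ne'
    obtain ⟨n, hn⟩ := ENNReal.exists_inv_nat_lt h1
    refine Set.mem_iUnion.mpr ⟨n, ?_⟩
    have hn1 : ((n : ℝ≥0∞) + 1)⁻¹ ≤ 1 - g z := by
      refine le_trans ?_ hn.le
      exact ENNReal.inv_le_inv.mpr (by simp)
    simp only [Set.mem_setOf_eq]
    have h2 : g z + ((n : ℝ≥0∞) + 1)⁻¹ ≤ 1 := by
      calc g z + ((n : ℝ≥0∞) + 1)⁻¹ ≤ g z + (1 - g z) := add_le_add le_rfl hn1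
        _ = 1 := add_tsub_cancel_of_le (hg1 z)
    exact ENNReal.le_sub_of_add_le_left (by simp) (by rwa [add_comm] at h2)
  refine measure_mono_null hsub2 ?_
  exact measure_iUnion_null fun k => hlevel k

end irred

end MCMCHarris

/-- Theorem 8. Every ϕ-irreducible full-dimensional Metropolis–Hastings
algorithm is Harris recurrent: if `π` is the normalized measure with density `f > 0` with
respect to `ν`, `π` is not a point mass, `q` is a jointly measurable proposal density with
`∫ q(x,y) ν(dy) = 1`, and `P` is the Metropolis–Hastings kernel
`P(x, A) = ∫_A q(x,y) α(x,y) ν(dy) + (1 − ∫ q(x,y) α(x,y) ν(dy)) δ_x(A)`,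
then ϕ-irreducibility of `P` implies that for every `A` with `π(A) > 0` and every `x`,
`P(τ_A < ∞ | X₀ = x) = 1`. -/
theorem thm8_metropolis_harris {X : Type*} [MeasurableSpace X]
    (ν : Measure X) [SigmaFinite ν]
    (f : X → ℝ) (hf_meas : Measurable f) (hf_pos : ∀ x, 0 < f x)
    (hf_int_pos : 0 < ∫⁻ x, ENNReal.ofReal (f x) ∂ν)
    (hf_int : ∫⁻ x, ENNReal.ofReal (f x) ∂ν ≠ ∞)
    (q : X → X → ℝ) (hq_meas : Measurable (Function.uncurry q))
    (hq_nonneg : ∀ x y, 0 ≤ q x y)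
    (hq_int : ∀ x, ∫⁻ y, ENNReal.ofReal (q x y) ∂ν = 1)
    (π : Measure X)
    (hπ : π = (∫⁻ x, ENNReal.ofReal (f x) ∂ν)⁻¹ •
      ν.withDensity (fun x => ENNReal.ofReal (f x)))
    (hπ_nondeg : ∀ x, π {x} < 1)
    (P : Kernel X X) [IsMarkovKernel P]
    (hP : ∀ x, ∀ A : Set X, MeasurableSet A →
      P x A = (∫⁻ y in A, ENNReal.ofReal (q x y * mhAlpha f q x y) ∂ν) +
        (1 - ∫⁻ y, ENNReal.ofReal (q x y * mhAlpha f q x y) ∂ν) * A.indicator 1 x)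
    (hirr : PhiIrreducibleOn P Set.univ) :
    HarrisRecurrentOn P π Set.univ := by
  classical
  have hftil_meas : Measurable fun x => ENNReal.ofReal (f x) := hf_meas.ennreal_ofReal
  -- π is a probability measure
  haveI hπprob : IsProbabilityMeasure π := by
    constructor
    rw [hπ, Measure.smul_apply, smul_eq_mul, withDensity_apply _ MeasurableSet.univ,
      setLIntegral_univ]
    exact ENNReal.inv_mul_cancel hf_int_pos.ne' hf_int
  -- stationarity
  have hstat : ∀ E : Set X, MeasurableSet E → ∫⁻ x, P x E ∂π = π E := by
    intro E hE
    rw [hπ]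
    simp only [Measure.smul_apply, smul_eq_mul, lintegral_smul_measure]
    rw [mh_stationary hf_meas hf_pos hq_meas hq_nonneg hq_int hP hE]
  -- π-null implies ν-null
  have hπν : ∀ E : Set X, MeasurableSet E → π E = 0 → ν E = 0 := by
    intro E hE h0
    rw [hπ, Measure.smul_apply, smul_eq_mul] at h0
    have hc0 : (∫⁻ x, ENNReal.ofReal (f x) ∂ν)⁻¹ ≠ 0 := ENNReal.inv_ne_zero.mpr hf_int
    have h1 : (ν.withDensity fun x => ENNReal.ofReal (f x)) E = 0 := by
      rcases mul_eq_zero.mp h0 with h | h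
      · exact absurd h hc0
      · exact h
    rw [withDensity_apply _ hE] at h1
    have h2 := (lintegral_eq_zero_iff hftil_meas).mp h1
    have h3 : ∀ᵐ z ∂(ν.restrict E), False := by
      filter_upwards [h2] with z hz
      exact absurd hz (ENNReal.ofReal_pos.mpr (hf_pos z)).ne'
    have h4 := ae_iff.mp h3
    simpa [Measure.restrict_apply MeasurableSet.univ] using h4
  -- P does not move null sets
  have hnull : ∀ N : Set X, MeasurableSet N → ν N = 0 → ∀ x, x ∉ N → P x N = 0 :=
    fun N hN hνN => mh_null hf_meas hq_meas hP hN hνN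
  -- get φ
  obtain ⟨φ, hφsf, hφne, hφirr⟩ := hirr
  have hirr' : ∀ x : X, ∀ A : Set X, MeasurableSet A → 0 < φ A → 0 < hitProb P A x :=
    fun x A hA hφA => hφirr x (Set.mem_univ x) A hA hφA
  -- main argument
  intro A hA hπA x _
  have hNnull : π {z | hitProb P A z < 1} = 0 :=
    hitProb_ae_one P π ν hstat hnull hπν φ hφne hirr' hA hπA
  set N : Set X := {z | hitProb P A z < 1} with hNdef
  have hNmeas : MeasurableSet N := measurableSet_lt (measurable_hitProb P hA) measurable_const
  have hνN : ν N = 0 := hπν N hNmeas hNnull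
  set g : X → ℝ≥0∞ := hitProb P A with hgdef
  have hg : Measurable g := measurable_hitProb P hA
  have hg1 : ∀ z, g z ≤ 1 := fun z => hitProb_le_one P z
  set g' : X → ℝ≥0∞ := fun y => A.indicator (fun _ => 1) y + Aᶜ.indicator g y with hg'def
  have hg'meas : Measurable g' := (measurable_const.indicator hA).add (hg.indicator hA.compl)
  have hg'1 : ∀ y, y ∉ N → g' y = 1 := by
    intro y hy
    rw [hg'def]
    by_cases hyA : y ∈ A
    · simp [Set.indicator_apply, hyA]
    · have : g y = 1 := by
        have h1 : ¬ (g y < 1) := hy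
        exact le_antisymm (hg1 y) (not_lt.mp h1)
      simp [Set.indicator_apply, hyA, this]
  set r : ℝ≥0∞ := mhAcc ν f q x with hrdef
  have hr_le : r ≤ 1 := mhAcc_le_one ν hf_pos hq_nonneg hq_int x
  have hdecomp := mh_decomp hP x
  have hfix : g x = ∫⁻ y, g' y ∂(P x) := hitProb_eq P hA x
  rw [hdecomp, lintegral_add_measure, lintegral_smul_measure, lintegral_dirac' x hg'meas,
    smul_eq_mul] at hfix
  have hwd : ∫⁻ y, g' y ∂(ν.withDensity (mhDens f q x)) = r := by
    have hac : ν.withDensity (mhDens f q x) ≪ ν := withDensity_absolutelyContinuous ν _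
    have hae : ∀ᵐ y ∂(ν.withDensity (mhDens f q x)), g' y = 1 := by
      have : ∀ᵐ y ∂(ν.withDensity (mhDens f q x)), y ∉ N := by
        rw [ae_iff]
        simpa using hac hνN
      filter_upwards [this] with y hy using hg'1 y hy
    rw [lintegral_congr_ae hae, lintegral_one]
    rw [withDensity_apply _ MeasurableSet.univ, setLIntegral_univ]
    rfl
  rw [hwd] at hfix
  -- now: g x = r + (1 - r) * g' x
  by_cases hxA : x ∈ A
  · have hgx' : g' x = 1 := by
      rw [hg'def]
      simp [Set.indicator_apply, hxA]
    rw [hgx', mul_one] at hfix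
    rw [hfix]
    exact add_tsub_cancel_of_le hr_le
  · have hgx' : g' x = g x := by
      rw [hg'def]
      simp [Set.indicator_apply, hxA]
    rw [hgx'] at hfix
    by_cases hr0 : r = 0
    · -- absorbed at x: contradiction with nondegeneracy
      exfalso
      have hwd0 : ν.withDensity (mhDens f q x) = 0 := by
        refine Measure.measure_univ_eq_zero.mp ?_
        rw [withDensity_apply _ MeasurableSet.univ, setLIntegral_univ]
        exact hr0
      have hPxd : P x = Measure.dirac x := by
        rw [hdecomp, hwd0, ← hrdef, hr0]
        simp
      have hBx : ∀ B : Set X, MeasurableSet B → 0 < π B → x ∈ B := by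
        intro B hB hπB
        have hpos := pi_irreducible P π ν hstat hnull hπν φ hφne hirr' hB hπB x
        rw [hitProb_of_dirac P hB x hPxd] at hpos
        by_contra hxB
        rw [Set.indicator_of_notMem hxB] at hpos
        exact lt_irrefl 0 hpos
      have hone : ∀ B : Set X, MeasurableSet B → x ∈ B → π B = 1 := by
        intro B hB hxB
        by_contra hne
        have h1 : π Bᶜ ≠ 0 := fun h0 => hne ((prob_compl_eq_zero_iff hB).mp h0)
        exact (hBx Bᶜ hB.compl (pos_iff_ne_zero.mpr h1)) hxB
      have hsingle : π {x} = 1 := by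
        rw [measure_eq_iInf]
        refine le_antisymm ?_ ?_
        · refine iInf_le_of_le Set.univ ?_
          refine iInf_le_of_le (Set.subset_univ _) ?_
          refine iInf_le_of_le MeasurableSet.univ ?_
          exact le_of_eq measure_univ
        · refine le_iInf fun t => le_iInf fun hst => le_iInf fun ht => ?_
          exact le_of_eq (hone t ht (hst rfl)).symm
      have := hπ_nondeg x
      rw [hsingle] at this
      exact lt_irrefl 1 this
    · -- r > 0 forces g x = 1
      have hgfin : g x ≠ ⊤ := ne_top_of_le_ne_top one_ne_top (hg1 x)
      have hrfin : r ≠ ⊤ := ne_top_of_le_ne_top one_ne_top hr_le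
      have h1rfin : (1 - r) ≠ ⊤ := ne_top_of_le_ne_top one_ne_top tsub_le_self
      have htr : (g x).toReal = r.toReal + (1 - r).toReal * (g x).toReal := by
        calc (g x).toReal = (r + (1 - r) * g x).toReal := by rw [← hfix]
          _ = r.toReal + ((1 - r) * g x).toReal := by
              rw [ENNReal.toReal_add hrfin (ENNReal.mul_ne_top h1rfin hgfin)]
          _ = r.toReal + (1 - r).toReal * (g x).toReal := by rw [ENNReal.toReal_mul]
      have h1r : (1 - r).toReal = 1 - r.toReal := by
        rw [ENNReal.toReal_sub_of_le hr_le one_ne_top, ENNReal.toReal_one]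
      rw [h1r] at htr
      have hρpos : 0 < r.toReal := ENNReal.toReal_pos hr0 hrfin
      have ha1 : (g x).toReal = 1 := by nlinarith [htr, hρpos]
      exact (ENNReal.toReal_eq_one_iff _).mp ha1
end

section
/- In the Metropolis-within-Gibbs setting on an open set X ⊆ ℝ^d, let M_i(x, ·) denote the kernel of the i-th coordinate update conditional on moving, i.e., from the decomposition P_i(x, ·) = (1 − r_i(x)) M_i(x, ·) + r_i(x) δ_x(·). Let (i_1, i_2, …, i_n) be any sequence of coordinate directions in which each of the d coordinate directions appears at least once. Then the composed kernel M_{i_1} M_{i_2} ⋯ M_{i_n} is absolutely continuous with respect to d-dimensional Lebesgue measure λ: if A is Borel with λ(A) = 0, then (M_{i_1} M_{i_2} ⋯ M_{i_n})(x, A) = 0 for all x ∈ X. -/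
open MeasureTheory ProbabilityTheory Filter Set ENNReal

namespace MCMCHarris

open MeasureTheory ProbabilityTheory Filter Set ENNReal

/-- Composition of a list of kernels, applying the head of the list first. -/
noncomputable def compList {Y : Type*} [MeasurableSpace Y] : List (Kernel Y Y) → Kernel Y Y
  | [] => Kernel.id
  | κ :: ks => (compList ks).comp κ

/-- The law at each time of the (possibly time-inhomogeneous) Markov chain with transition
kernels `K 0, K 1, K 2, …` started at `y₀`. -/
noncomputable def chainLaw {Y : Type*} [MeasurableSpace Y] (K : ℕ → Kernel Y Y) (y₀ : Y) :
    ℕ → Measure Y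
  | 0 => Measure.dirac y₀
  | n + 1 => (chainLaw K y₀ n).bind (K n)

variable {d : ℕ}

/-- The Metropolis-within-Gibbs acceptance probability for updating coordinate `i` of `x`
to the value `z`: `min(1, f(y) q_i(y, xᵢ) / (f(x) q_i(x, z)))` where `y = update x i z`,
set to `1` when the denominator vanishes. -/
noncomputable def gibbsAlpha (f : (Fin d → ℝ) → ℝ) (q : Fin d → (Fin d → ℝ) → ℝ → ℝ)
    (i : Fin d) (x : Fin d → ℝ) (z : ℝ) : ℝ :=
  if f x * q i x z = 0 then 1
  else min 1 (f (Function.update x i z) * q i (Function.update x i z) (x i) /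
    (f x * q i x z))

/-- The sub-probability mass with which the Metropolis update of coordinate `i` from `x`
proposes **and accepts** a move into the set `A`. -/
noncomputable def moveMass (f : (Fin d → ℝ) → ℝ) (q : Fin d → (Fin d → ℝ) → ℝ → ℝ)
    (i : Fin d) (x : Fin d → ℝ) (A : Set (Fin d → ℝ)) : ℝ≥0∞ :=
  ∫⁻ z, A.indicator 1 (Function.update x i z) *
    ENNReal.ofReal (q i x z * gibbsAlpha f q i x z)

/-- The proposal densities `q_i` are symmetrically positive:
`q_i((x₁,…,y,…,x_d), z) > 0 ↔ q_i((x₁,…,z,…,x_d), y) > 0`. -/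
def SymPositive (q : Fin d → (Fin d → ℝ) → ℝ → ℝ) : Prop :=
  ∀ i : Fin d, ∀ x : Fin d → ℝ, ∀ y z : ℝ,
    0 < q i (Function.update x i y) z ↔ 0 < q i (Function.update x i z) y

end MCMCHarris

open MCMCHarris MeasureTheory ProbabilityTheory Filter Set ENNReal


section AbsContAux

open MeasureTheory Set ENNReal Function

/-- **Fubini slice lemma.** If `C` is a Lebesgue-null Borel subset of `ℝ^d`, then for
Lebesgue-a.e. `v`, the one-dimensional slice of `C` through `v` along coordinate `i`
is null. -/
lemma sliceNull {d : ℕ} (C : Set (Fin d → ℝ)) (hC : MeasurableSet C)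
    (h0 : (volume : Measure (Fin d → ℝ)) C = 0) (i : Fin d) :
    (volume : Measure (Fin d → ℝ))
      {v : Fin d → ℝ | (volume : Measure ℝ) {z : ℝ | Function.update v i z ∈ C} ≠ 0} = 0 := by
  set μ : Fin d → Measure ℝ := fun _ => volume with hμ
  set F : (Fin d → ℝ) → ℝ≥0∞ := C.indicator (1 : (Fin d → ℝ) → ℝ≥0∞) with hF
  have hFm : Measurable F := measurable_const.indicator hC
  set g : (Fin d → ℝ) → ℝ≥0∞ := ∫⋯∫⁻_{i}, F ∂μ with hg
  have hgm : Measurable g := hFm.lmarginal μ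
  have hg_apply : ∀ v : Fin d → ℝ,
      g v = (volume : Measure ℝ) {z : ℝ | Function.update v i z ∈ C} := by
    intro v
    have hpre : MeasurableSet {z : ℝ | Function.update v i z ∈ C} :=
      (measurable_update v (a := i)) hC
    rw [hg, MeasureTheory.lmarginal_singleton]
    rw [← MeasureTheory.lintegral_indicator_one hpre]
    refine lintegral_congr fun z => ?_
    by_cases hz : Function.update v i z ∈ C
    · simp [hF, hz, Set.indicator_of_mem, Set.indicator_of_mem (show z ∈ {z : ℝ | Function.update v i z ∈ C} from hz)]
    · simp [hF, Set.indicator_of_notMem hz,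
        Set.indicator_of_notMem (show z ∉ {z : ℝ | Function.update v i z ∈ C} from hz)]
  have hg_erase : ∀ y : Fin d → ℝ, (∫⋯∫⁻_(Finset.univ.erase i), g ∂μ) y = 0 := by
    intro y
    have hdisj : Disjoint (Finset.univ.erase i) ({i} : Finset (Fin d)) := by
      simp [Finset.disjoint_singleton_right]
    have hun : (Finset.univ.erase i) ∪ ({i} : Finset (Fin d)) = Finset.univ := by
      rw [Finset.union_comm, ← Finset.insert_eq, Finset.insert_erase (Finset.mem_univ i)]
    have := MeasureTheory.lmarginal_union μ F hFm hdisj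
    rw [hun] at this
    have hmC : ∫⁻ x, F x ∂(Measure.pi μ) = 0 := by
      rw [hF, MeasureTheory.lintegral_indicator_one hC]
      rw [hμ]
      rw [← MeasureTheory.volume_pi]
      exact h0
    calc (∫⋯∫⁻_(Finset.univ.erase i), g ∂μ) y
        = (∫⋯∫⁻_Finset.univ, F ∂μ) y := by rw [this]
      _ = 0 := by rw [MeasureTheory.lmarginal_univ]; exact hmC
  have htotal : ∫⁻ v, g v ∂(volume : Measure (Fin d → ℝ)) = 0 := by
    rw [MeasureTheory.volume_pi]
    rw [MeasureTheory.lintegral_eq_lmarginal_univ (μ := μ) (f := g) (fun _ => 0)]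
    rw [← Finset.insert_erase (Finset.mem_univ i)]
    rw [MeasureTheory.lmarginal_insert g hgm (Finset.notMem_erase i Finset.univ)]
    simp only [hg_erase]
    simp
  have hae : g =ᵐ[(volume : Measure (Fin d → ℝ))] 0 :=
    (lintegral_eq_zero_iff hgm).mp htotal
  have : (volume : Measure (Fin d → ℝ)) {v | g v ≠ 0} = 0 := by
    rw [Filter.EventuallyEq, ae_iff] at hae
    simpa using hae
  refine measure_mono_null ?_ this
  intro v hv
  simp only [Set.mem_setOf_eq] at hv ⊢
  rw [hg_apply v]
  exact hv

end AbsContAux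


section MainAux

open MeasureTheory Set ENNReal Function

/-- Auxiliary invariant for the proof of Lemma 10: the measure `μ` vanishes on the
complement of `{f > 0}`, and vanishes on every set `A` all of whose "patched" preimages
(freezing the coordinates outside `S`) are Lebesgue-null. -/
def GoodAux {d : ℕ} (f : (Fin d → ℝ) → ℝ) (μ : Measure (Fin d → ℝ)) (S : Finset (Fin d)) :
    Prop :=
  μ {x | ¬ 0 < f x} = 0 ∧ ∀ A : Set (Fin d → ℝ), MeasurableSet A →
    (∀ w : Fin d → ℝ,
      (volume : Measure (Fin d → ℝ)) {v | (fun j => if j ∈ S then v j else w j) ∈ A} = 0) →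
    μ A = 0

end MainAux

/-- Lemma 10. In the Metropolis-within-Gibbs setting on the open set
`X = {x | f x > 0} ⊆ ℝ^d`, let `M i` be the kernel of the `i`-th coordinate update
conditional on moving. If `(i₁, …, iₙ)` is a sequence of coordinate directions in which every
one of the `d` directions appears, then the composed kernel `M_{i₁} ⋯ M_{iₙ}` is absolutely
continuous with respect to Lebesgue measure: it assigns mass `0` to every Lebesgue-null
Borel set, from every starting point of `X`. -/
theorem lem10_composed_move_kernels_abs_cont {d : ℕ}
    (f : (Fin d → ℝ) → ℝ) (hf_meas : Measurable f) (hf_nonneg : ∀ x, 0 ≤ f x)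
    (hopen : IsOpen {x | 0 < f x})
    (hf_int : ∫⁻ x, ENNReal.ofReal (f x) ≠ ∞)
    (q : Fin d → (Fin d → ℝ) → ℝ → ℝ)
    (hq_meas : ∀ i, Measurable (Function.uncurry (q i)))
    (hq_nonneg : ∀ i x z, 0 ≤ q i x z)
    (hq_int : ∀ i x, ∫⁻ z, ENNReal.ofReal (q i x z) = 1)
    (hsym : SymPositive q)
    (hQX : ∀ (i : Fin d) (x : Fin d → ℝ), 0 < f x →
      0 < ∫⁻ z in {z | 0 < f (Function.update x i z)}, ENNReal.ofReal (q i x z))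
    (M : Fin d → Kernel (Fin d → ℝ) (Fin d → ℝ)) [∀ i, IsMarkovKernel (M i)]
    (hM : ∀ (i : Fin d) (x : Fin d → ℝ) (A : Set (Fin d → ℝ)), MeasurableSet A →
      moveMass f q i x Set.univ * M i x A = moveMass f q i x A)
    (l : List (Fin d)) (hl : ∀ j : Fin d, j ∈ l) :
    ∀ x : Fin d → ℝ, 0 < f x → ∀ A : Set (Fin d → ℝ), MeasurableSet A →
      volume A = 0 → compList (l.map M) x A = 0 := by
  classical
  -- measurability preliminaries
  have hq1 : ∀ (i : Fin d) (y : Fin d → ℝ), Measurable (q i y) := by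
    intro i y
    exact (hq_meas i).comp measurable_prodMk_left
  have hα_meas : ∀ (i : Fin d) (y : Fin d → ℝ), Measurable (gibbsAlpha f q i y) := by
    intro i y
    have hden : Measurable fun z : ℝ => f y * q i y z := (hq1 i y).const_mul (f y)
    have hset : MeasurableSet {z : ℝ | f y * q i y z = 0} :=
      hden (measurableSet_singleton 0)
    have hu : Measurable fun z : ℝ => Function.update y i z := measurable_update y
    have hnum : Measurable fun z : ℝ =>
        f (Function.update y i z) * q i (Function.update y i z) (y i) :=
      (hf_meas.comp hu).mul ((hq_meas i).comp (hu.prodMk measurable_const))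
    exact Measurable.ite hset measurable_const (measurable_const.min (hnum.div hden))
  set N : Set (Fin d → ℝ) := {x | ¬ 0 < f x} with hNdef
  have hN : MeasurableSet N := by
    have : N = {x | 0 < f x}ᶜ := by ext x; simp [hNdef]
    rw [this]; exact hopen.measurableSet.compl
  -- positivity of the total move mass
  have hc_ne : ∀ (i : Fin d) (y : Fin d → ℝ), 0 < f y → moveMass f q i y Set.univ ≠ 0 := by
    intro i y hy hzero
    set U : Set ℝ := {z | 0 < f (Function.update y i z)} with hUdef
    have hUmeas : MeasurableSet U :=
      measurableSet_lt measurable_const (hf_meas.comp (measurable_update y))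
    set E : Set ℝ := {z | 0 < f (Function.update y i z) ∧ 0 < q i y z} with hEdef
    have hEpos : (volume : Measure ℝ) E ≠ 0 := by
      intro h0
      have h1 : ∫⁻ z in U, ENNReal.ofReal (q i y z) ∂(volume : Measure ℝ) = 0 := by
        rw [← lintegral_indicator hUmeas]
        have hz : (fun z => U.indicator (fun z => ENNReal.ofReal (q i y z)) z)
            =ᵐ[(volume : Measure ℝ)] 0 := by
          rw [Filter.EventuallyEq, ae_iff]
          refine measure_mono_null ?_ h0
          intro z hz
          simp only [Set.mem_setOf_eq, Pi.zero_apply] at hz ⊢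
          by_contra hzE
          apply hz
          by_cases hzU : z ∈ U
          · rw [Set.indicator_of_mem hzU, ENNReal.ofReal_eq_zero]
            by_contra hq0
            push_neg at hq0
            exact hzE ⟨hzU, hq0⟩
          · rw [Set.indicator_of_notMem hzU]
        rw [lintegral_congr_ae hz]
        simp
      exact absurd h1 (ne_of_gt (hQX i y hy))
    have hmm : moveMass f q i y Set.univ
        = ∫⁻ z, ENNReal.ofReal (q i y z * gibbsAlpha f q i y z) := by
      unfold moveMass
      refine lintegral_congr fun z => ?_
      rw [Set.indicator_univ, Pi.one_apply, one_mul]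
    rw [hmm] at hzero
    have hmeas : Measurable fun z => ENNReal.ofReal (q i y z * gibbsAlpha f q i y z) :=
      ((hq1 i y).mul (hα_meas i y)).ennreal_ofReal
    have hae := (lintegral_eq_zero_iff hmeas).mp hzero
    rw [Filter.EventuallyEq, ae_iff] at hae
    apply hEpos
    refine measure_mono_null ?_ hae
    intro z hz
    obtain ⟨hzf, hzq⟩ := hz
    simp only [Set.mem_setOf_eq, Pi.zero_apply]
    intro heq
    rw [ENNReal.ofReal_eq_zero] at heq
    have hαpos : 0 < gibbsAlpha f q i y z := by
      by_cases hd : f y * q i y z = 0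
      · unfold gibbsAlpha; rw [if_pos hd]; exact one_pos
      · unfold gibbsAlpha; rw [if_neg hd]
        have hnum : 0 < f (Function.update y i z) * q i (Function.update y i z) (y i) := by
          refine mul_pos hzf ?_
          have hs := hsym i y z (y i)
          rw [Function.update_eq_self] at hs
          exact hs.mpr hzq
        exact lt_min one_pos (div_pos hnum (mul_pos hy hzq))
    exact absurd heq (not_le.mpr (mul_pos hzq hαpos))
  -- null slices give null move kernel
  have hMnull : ∀ (i : Fin d) (y : Fin d → ℝ) (A : Set (Fin d → ℝ)), MeasurableSet A →
      0 < f y → (volume : Measure ℝ) {z | Function.update y i z ∈ A} = 0 → M i y A = 0 := by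
    intro i y A hA hy hsl
    have hmA : moveMass f q i y A = 0 := by
      unfold moveMass
      have hz : (fun z => A.indicator 1 (Function.update y i z) *
          ENNReal.ofReal (q i y z * gibbsAlpha f q i y z)) =ᵐ[(volume : Measure ℝ)] 0 := by
        rw [Filter.EventuallyEq, ae_iff]
        refine measure_mono_null ?_ hsl
        intro z hz
        simp only [Set.mem_setOf_eq, Pi.zero_apply] at hz ⊢
        by_contra hzA
        exact hz (by rw [Set.indicator_of_notMem hzA, zero_mul])
      rw [lintegral_congr_ae hz]
      simp
    have h2 := hM i y A hA
    rw [hmA] at h2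
    rcases mul_eq_zero.mp h2 with h | h
    · exact absurd h (hc_ne i y hy)
    · exact h
  -- the move kernel stays in the positivity region
  have hMstay : ∀ (i : Fin d) (y : Fin d → ℝ), 0 < f y → M i y N = 0 := by
    intro i y hy
    have hmA : moveMass f q i y N = 0 := by
      unfold moveMass
      have hz : ∀ z : ℝ, N.indicator 1 (Function.update y i z) *
          ENNReal.ofReal (q i y z * gibbsAlpha f q i y z) = 0 := by
        intro z
        by_cases hzN : Function.update y i z ∈ N
        · have hfz : f (Function.update y i z) = 0 :=
            le_antisymm (not_lt.mp hzN) (hf_nonneg _)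
          have hqα : q i y z * gibbsAlpha f q i y z = 0 := by
            by_cases hd : f y * q i y z = 0
            · have hq0 : q i y z = 0 := by
                rcases mul_eq_zero.mp hd with h | h
                · exact absurd h (ne_of_gt hy)
                · exact h
              rw [hq0, zero_mul]
            · unfold gibbsAlpha
              rw [if_neg hd, hfz, zero_mul, zero_div, min_eq_right (le_of_lt one_pos),
                mul_zero]
          rw [hqα, ENNReal.ofReal_zero, mul_zero]
        · rw [Set.indicator_of_notMem hzN, zero_mul]
      exact (lintegral_congr hz).trans lintegral_zero
    have h2 := hM i y N hN
    rw [hmA] at h2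
    rcases mul_eq_zero.mp h2 with h | h
    · exact absurd h (hc_ne i y hy)
    · exact h
  -- one-step preservation of the invariant
  have step : ∀ (i : Fin d) (S : Finset (Fin d)) (μ : Measure (Fin d → ℝ)),
      GoodAux f μ S → GoodAux f (μ.bind (M i)) (insert i S) := by
    intro i S μ hμ
    obtain ⟨h1, h2⟩ := hμ
    have hbind : ∀ A : Set (Fin d → ℝ), MeasurableSet A →
        μ.bind (M i) A = ∫⁻ y, M i y A ∂μ := fun A hA =>
      Measure.bind_apply hA (Kernel.measurable (M i)).aemeasurable
    constructor
    · rw [show {x | ¬ 0 < f x} = N from rfl, hbind N hN,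
        lintegral_eq_zero_iff (Kernel.measurable_coe (M i) hN), Filter.EventuallyEq, ae_iff]
      refine measure_mono_null ?_ h1
      intro y hy
      simp only [Set.mem_setOf_eq, Pi.zero_apply] at hy ⊢
      by_contra hyN
      exact hy (hMstay i y (by simpa using hyN))
    · intro A hA hnullA
      set g : (Fin d → ℝ) → ℝ≥0∞ :=
        fun y => (volume : Measure ℝ) {z | Function.update y i z ∈ A} with hgdef
      have hg_eq : g = fun y => ∫⁻ z,
          A.indicator (1 : (Fin d → ℝ) → ℝ≥0∞) (Function.update y i z) ∂(volume : Measure ℝ) := by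
        funext y
        have hpre : MeasurableSet {z : ℝ | Function.update y i z ∈ A} :=
          (measurable_update y) hA
        rw [show g y = (volume : Measure ℝ) {z : ℝ | Function.update y i z ∈ A} from rfl,
          ← lintegral_indicator_one hpre]
        refine lintegral_congr fun z => ?_
        by_cases hz : Function.update y i z ∈ A
        · rw [Set.indicator_of_mem hz,
            Set.indicator_of_mem (show z ∈ {z : ℝ | Function.update y i z ∈ A} from hz)]
          rfl
        · rw [Set.indicator_of_notMem hz,
            Set.indicator_of_notMem (show z ∉ {z : ℝ | Function.update y i z ∈ A} from hz)]
      have hgm : Measurable g := by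
        rw [hg_eq]
        exact ((measurable_one.indicator hA).comp measurable_update').lintegral_prod_right'
      set B : Set (Fin d → ℝ) := {y | g y ≠ 0} with hBdef
      have hBmeas : MeasurableSet B := by
        have : B = (g ⁻¹' {0})ᶜ := by ext y; simp [hBdef]
        rw [this]
        exact (hgm (measurableSet_singleton 0)).compl
      have hBnull : μ B = 0 := by
        refine h2 B hBmeas ?_
        intro w
        set C : Set (Fin d → ℝ) :=
          {v | (fun j => if j ∈ insert i S then v j else w j) ∈ A} with hCdef
        have hpatch : Measurable fun v : Fin d → ℝ =>
            (fun j => if j ∈ insert i S then v j else w j : Fin d → ℝ) := by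
          refine measurable_pi_lambda _ fun j => ?_
          by_cases hj : j ∈ insert i S
          · simpa [hj] using measurable_pi_apply j
          · simpa [hj] using measurable_const
        have hCmeas : MeasurableSet C := hpatch hA
        have hslice := sliceNull C hCmeas (hnullA w) i
        refine measure_mono_null ?_ hslice
        intro v hv
        simp only [Set.mem_setOf_eq] at hv ⊢
        have hpt : ∀ z : ℝ, (fun j => if j ∈ insert i S then Function.update v i z j else w j)
            = Function.update (fun j => if j ∈ S then v j else w j) i z := by
          intro z
          funext j
          by_cases hj : j = i
          · subst hj; simp
          · simp [Function.update_of_ne hj, Finset.mem_insert, hj]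
        have hseteq : {z : ℝ | Function.update v i z ∈ C}
            = {z : ℝ | Function.update (fun j => if j ∈ S then v j else w j) i z ∈ A} := by
          ext z
          simp only [hCdef, Set.mem_setOf_eq]
          rw [hpt z]
        rw [hseteq]
        exact hv
      rw [hbind A hA, lintegral_eq_zero_iff (Kernel.measurable_coe (M i) hA),
        Filter.EventuallyEq, ae_iff]
      refine measure_mono_null ?_ (measure_union_null h1 hBnull)
      intro y hy
      simp only [Set.mem_setOf_eq, Pi.zero_apply] at hy
      by_contra hyc
      rw [Set.mem_union] at hyc
      push_neg at hyc
      obtain ⟨hyN, hyB⟩ := hyc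
      have hfy : 0 < f y := by simpa using hyN
      have hgy : g y = 0 := by simpa [hBdef] using hyB
      exact hy (hMnull i y A hA hfy hgy)
  -- the invariant along a list of updates
  have main : ∀ (l' : List (Fin d)) (S : Finset (Fin d)) (μ : Measure (Fin d → ℝ)),
      GoodAux f μ S → GoodAux f (μ.bind (compList (l'.map M))) (S ∪ l'.toFinset) := by
    intro l'
    induction l' with
    | nil =>
      intro S μ hμ
      have h1 : μ.bind ⇑(compList (List.map M List.nil)) = μ := by
        have hco : ⇑(compList (List.map M (List.nil : List (Fin d)))) = Measure.dirac := by
          funext a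
          show compList List.nil a = Measure.dirac a
          rw [show compList (List.nil : List (Kernel (Fin d → ℝ) (Fin d → ℝ))) = Kernel.id from rfl]
          exact Kernel.id_apply a
        rw [hco, Measure.bind_dirac]
      have h2 : S ∪ (List.nil : List (Fin d)).toFinset = S := by simp
      rw [h1, h2]
      exact hμ
    | cons i rest ih =>
      intro S μ hμ
      have hih := ih (insert i S) (μ.bind (M i)) (step i S μ hμ)
      have hcomp : μ.bind ⇑(compList ((i :: rest).map M))
          = (μ.bind (M i)).bind ⇑(compList (rest.map M)) := by
        rw [show compList ((i :: rest).map M) = (compList (rest.map M)).comp (M i) from rfl]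
        ext A hA
        rw [Measure.bind_apply hA (Kernel.measurable _).aemeasurable,
          Measure.bind_apply hA (Kernel.measurable _).aemeasurable,
          Measure.lintegral_bind (Kernel.measurable (M i)).aemeasurable
            (Kernel.measurable_coe _ hA).aemeasurable]
        exact lintegral_congr fun y => Kernel.comp_apply' _ _ _ hA
      have hfin : S ∪ (i :: rest).toFinset = (insert i S) ∪ rest.toFinset := by
        ext j
        simp only [List.toFinset_cons, Finset.mem_union, Finset.mem_insert]
        tauto
      rw [hcomp, hfin]
      exact hih
  -- the base case
  have hbase : ∀ x : Fin d → ℝ, 0 < f x → GoodAux f (Measure.dirac x) ∅ := by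
    intro x hx
    constructor
    · rw [show {x | ¬ 0 < f x} = N from rfl, Measure.dirac_apply' x hN,
        Set.indicator_of_notMem (not_not_intro hx)]
    · intro A hA hnullA
      have hxA : x ∉ A := by
        intro hxA
        have h := hnullA x
        have hset : {v : Fin d → ℝ |
            (fun j => if j ∈ (∅ : Finset (Fin d)) then v j else x j) ∈ A} = Set.univ := by
          refine Set.eq_univ_of_forall fun v => ?_
          simpa only [Set.mem_setOf_eq, Finset.notMem_empty, if_false] using hxA
        rw [hset] at h
        have huniv : (volume : Measure (Fin d → ℝ)) Set.univ ≠ 0 := by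
          rw [MeasureTheory.volume_pi, Measure.pi_univ]
          refine Finset.prod_ne_zero_iff.mpr fun j _ => ?_
          rw [Real.volume_univ]
          exact ENNReal.top_ne_zero
        exact huniv h
      rw [Measure.dirac_apply' x hA, Set.indicator_of_notMem hxA]
  -- conclusion
  intro x hx A hA hvol
  have hnull : ∀ w : Fin d → ℝ, (volume : Measure (Fin d → ℝ))
      {v | (fun j => if j ∈ ((∅ : Finset (Fin d)) ∪ l.toFinset) then v j else w j) ∈ A} = 0 := by
    intro w
    have hset : {v : Fin d → ℝ |
        (fun j => if j ∈ ((∅ : Finset (Fin d)) ∪ l.toFinset) then v j else w j) ∈ A} = A := by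
      ext v
      simp only [Set.mem_setOf_eq]
      have hvv : (fun j => if j ∈ ((∅ : Finset (Fin d)) ∪ l.toFinset) then v j else w j) = v := by
        funext j
        rw [if_pos (Finset.mem_union.mpr (Or.inr (List.mem_toFinset.mpr (hl j))))]
      rw [hvv]
    rw [hset]
    exact hvol
  have h0 := (main l ∅ (Measure.dirac x) (hbase x hx)).2 A hA hnull
  rw [Measure.dirac_bind (Kernel.measurable _) x] at h0
  exact h0
end

section
/- Consider a Metropolis-within-Gibbs Markov chain {X_n} on an open set X ⊆ ℝ^d with target density f > 0. If A is a Borel set of Lebesgue measure 0, then for every initial state x_0 and every n, P[X_n ∈ A | X_0 = x_0] ≤ P[D_n], where D_n is the event that by time n the chain has not yet moved (i.e., accepted a proposal) at least once in each of the d coordinate directions. -/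
open MeasureTheory ProbabilityTheory Filter Set ENNReal

open MCMCHarris MeasureTheory ProbabilityTheory Filter Set ENNReal

namespace Cor11Aux

variable {d : ℕ}

lemma map_update_prod (m : Fin d → Measure ℝ) [∀ j, SigmaFinite (m j)] (i : Fin d)
    [IsProbabilityMeasure (m i)] :
    Measure.pi (Function.update m i (volume : Measure ℝ)) =
      Measure.map (fun p : (Fin d → ℝ) × ℝ => Function.update p.1 i p.2)
        ((Measure.pi m).prod volume) := by
  haveI : ∀ j, SigmaFinite (Function.update m i (volume : Measure ℝ) j) := by
    intro j
    rcases eq_or_ne j i with rfl | h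
    · rw [Function.update_self]; infer_instance
    · rw [Function.update_of_ne h]; infer_instance
  refine Measure.pi_eq fun s hs => ?_
  rw [Measure.map_apply measurable_update' (MeasurableSet.univ_pi hs)]
  have hpre : (fun p : (Fin d → ℝ) × ℝ => Function.update p.1 i p.2) ⁻¹' Set.pi Set.univ s
      = (Set.pi Set.univ (Function.update s i Set.univ)) ×ˢ (s i) := by
    ext ⟨x, z⟩
    simp only [Set.mem_preimage, Set.mem_pi, Set.mem_univ, forall_true_left, Set.mem_prod]
    constructor
    · intro h
      refine ⟨fun j => ?_, by simpa using h i⟩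
      rcases eq_or_ne j i with rfl | hj
      · simp
      · simpa [Function.update_of_ne hj] using h j
    · rintro ⟨h1, h2⟩ j
      rcases eq_or_ne j i with rfl | hj
      · simpa using h2
      · simpa [Function.update_of_ne hj] using h1 j
  rw [hpre, Measure.prod_prod, Measure.pi_pi]
  have h1 : ∀ j, m j (Function.update s i Set.univ j)
      = Function.update (fun j => m j (s j)) i 1 j := by
    intro j; rcases eq_or_ne j i with rfl | hj
    · simp
    · simp [Function.update_of_ne hj]
  have h2 : ∀ j, (Function.update m i (volume : Measure ℝ)) j (s j)
      = Function.update (fun j => m j (s j)) i (volume (s i)) j := by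
    intro j; rcases eq_or_ne j i with rfl | hj
    · simp
    · simp [Function.update_of_ne hj]
  rw [Finset.prod_congr rfl (fun j _ => h1 j), Finset.prod_congr rfl (fun j _ => h2 j),
    Finset.prod_update_of_mem (Finset.mem_univ i), Finset.prod_update_of_mem (Finset.mem_univ i),
    one_mul, mul_comm]

lemma pi_update_apply (m : Fin d → Measure ℝ) [∀ j, SigmaFinite (m j)] (i : Fin d)
    [IsProbabilityMeasure (m i)] {B : Set (Fin d → ℝ)} (hB : MeasurableSet B) :
    Measure.pi (Function.update m i (volume : Measure ℝ)) B
      = ∫⁻ x, volume {z | Function.update x i z ∈ B} ∂(Measure.pi m) := by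
  rw [map_update_prod m i, Measure.map_apply measurable_update' hB,
    Measure.prod_apply (measurable_update' hB)]
  rfl

lemma pi_dirac (x : Fin d → ℝ) :
    Measure.pi (fun j => Measure.dirac (x j)) = Measure.dirac x := by
  refine Measure.pi_eq fun s hs => ?_
  by_cases h : ∀ j, x j ∈ s j
  · rw [Measure.dirac_apply, Set.indicator_of_mem (Set.mem_univ_pi.mpr h), Pi.one_apply]
    exact (Finset.prod_eq_one fun j _ => by
      rw [Measure.dirac_apply, Set.indicator_of_mem (h j), Pi.one_apply]).symm
  · push_neg at h
    obtain ⟨j, hj⟩ := h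
    rw [Measure.dirac_apply,
      Set.indicator_of_notMem (fun hmem => hj (Set.mem_univ_pi.mp hmem j))]
    exact (Finset.prod_eq_zero (Finset.mem_univ j)
      (by rw [Measure.dirac_apply, Set.indicator_of_notMem hj])).symm

noncomputable def mT (t : Fin d → Bool) (x : Fin d → ℝ) : Fin d → Measure ℝ :=
  fun j => if t j then volume else Measure.dirac (x j)

instance (t : Fin d → Bool) (x : Fin d → ℝ) (j : Fin d) : SigmaFinite (mT t x j) := by
  unfold mT; cases t j
  · simp; infer_instance
  · simp; infer_instance

end Cor11Aux

open Cor11Aux in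
private lemma key_invariant {d : ℕ} (f : (Fin d → ℝ) → ℝ) (q : Fin d → (Fin d → ℝ) → ℝ → ℝ)
    (w : ℕ → Fin d → ℝ≥0∞)
    (K : ℕ → Kernel ((Fin d → ℝ) × (Fin d → Bool)) ((Fin d → ℝ) × (Fin d → Bool)))
    (hK : ∀ (n : ℕ) (x : Fin d → ℝ) (t : Fin d → Bool)
        (A : Set ((Fin d → ℝ) × (Fin d → Bool))), MeasurableSet A →
      K n (x, t) A = ∑ i, w n i *
        ((∫⁻ z, A.indicator 1 (Function.update x i z, Function.update t i true) *
            ENNReal.ofReal (q i x z * gibbsAlpha f q i x z)) +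
          (1 - moveMass f q i x Set.univ) * A.indicator 1 (x, t)))
    (x₀ : Fin d → ℝ) :
    ∀ (n : ℕ) (t : Fin d → Bool) (B : Set (Fin d → ℝ)), MeasurableSet B →
      (∀ x, Measure.pi (mT t x) B = 0) →
      chainLaw K (x₀, fun _ => false) n (B ×ˢ ({t} : Set (Fin d → Bool))) = 0 := by
  classical
  intro n
  induction n with
  | zero =>
    intro t B hB hnull
    simp only [chainLaw, Measure.dirac_apply, Set.indicator_apply]
    split_ifs with h
    · exfalso
      obtain ⟨hx, ht⟩ := h
      rw [Set.mem_singleton_iff] at ht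
      have h0 := hnull x₀
      have hmt : mT t x₀ = fun j => Measure.dirac (x₀ j) := by
        funext j; simp [mT, ← ht]
      rw [hmt, pi_dirac] at h0
      rw [Measure.dirac_apply] at h0
      simp [Set.indicator_apply, hx] at h0
    · rfl
  | succ n ih =>
    intro t' B hB hnull
    have hS' : MeasurableSet (B ×ˢ ({t'} : Set (Fin d → Bool))) :=
      hB.prod (measurableSet_singleton t')
    set g : Fin d → (Fin d → ℝ) → ℝ≥0∞ :=
      fun i x => ∫⁻ z, B.indicator 1 (Function.update x i z) with hg
    have hgmeas : ∀ i, Measurable (g i) := by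
      intro i
      exact Measurable.lintegral_prod_right'
        (f := fun p : (Fin d → ℝ) × ℝ => B.indicator 1 (Function.update p.1 i p.2))
        ((measurable_const.indicator hB).comp measurable_update')
    have hgvol : ∀ i x, g i x = volume {z | Function.update x i z ∈ B} := by
      intro i x
      have h1 : ∀ z, B.indicator (1 : (Fin d → ℝ) → ℝ≥0∞) (Function.update x i z)
          = ((Function.update x i) ⁻¹' B).indicator 1 z := by
        intro z; simp [Set.indicator_apply, Set.mem_preimage]
      simp only [hg, h1]
      rw [lintegral_indicator_one (measurable_update x hB)]
      rfl
    have hindep : ∀ i y z, g i (Function.update y i z) = g i y := by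
      intro i y z
      simp only [hg, Function.update_idem]
    set S : (Fin d → Bool) → Set (Fin d → ℝ) := fun t =>
      (if t = t' then B else ∅) ∪
        ⋃ i, (if Function.update t i true = t' then {x | g i x ≠ 0} else ∅) with hSdef
    have hSmeas : ∀ t, MeasurableSet (S t) := by
      intro t
      apply MeasurableSet.union
      · split_ifs
        · exact hB
        · exact MeasurableSet.empty
      · apply MeasurableSet.iUnion
        intro i
        split_ifs
        · exact (hgmeas i) (measurableSet_singleton 0).compl
        · exact MeasurableSet.empty
    have hSnull : ∀ t x, Measure.pi (mT t x) (S t) = 0 := by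
      intro t x
      apply measure_union_null
      · split_ifs with h
        · rw [h]; exact hnull x
        · simp
      · apply measure_iUnion_null
        intro i
        split_ifs with h
        swap
        · simp
        set m := mT (Function.update t i false) x with hm
        haveI : IsProbabilityMeasure (m i) := by
          rw [hm]; simp only [mT, Function.update_self]
          simp; infer_instance
        have ht'i : t' i = true := by rw [← h]; simp
        have hup : Function.update m i (volume : Measure ℝ) = mT t' x := by
          funext j
          rcases eq_or_ne j i with rfl | hj
          · simp [mT, ht'i]
          · have : t' j = t j := by rw [← h, Function.update_of_ne hj]
            simp [Function.update_of_ne hj, hm, mT, this]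
        have h0' : ∫⁻ y, g i y ∂(Measure.pi m) = 0 := by
          simp only [hgvol]
          rw [← pi_update_apply m i hB, hup]
          exact hnull x
        have hae : ∀ᵐ y ∂(Measure.pi m), g i y = 0 :=
          (lintegral_eq_zero_iff (hgmeas i)).mp h0'
        have hmnull : Measure.pi m {y | g i y ≠ 0} = 0 := by
          simpa [ae_iff] using hae
        cases hti : t i with
        | false =>
          have htt : Function.update t i false = t := by
            funext j
            rcases eq_or_ne j i with rfl | hj
            · simp [hti]
            · simp [Function.update_of_ne hj]
          rw [← htt]
          exact hmnull
        | true =>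
          have hE : MeasurableSet {y | g i y ≠ 0} :=
            (hgmeas i) (measurableSet_singleton 0).compl
          have hmt : mT t x = Function.update m i (volume : Measure ℝ) := by
            funext j
            rcases eq_or_ne j i with rfl | hj
            · simp [mT, hti]
            · simp [hm, mT, Function.update_of_ne hj]
          rw [hmt, pi_update_apply m i hE]
          have hpt : ∀ y, volume {z | Function.update y i z ∈ {u | g i u ≠ 0}}
              = ({u | g i u ≠ 0} : Set (Fin d → ℝ)).indicator
                  (fun _ => volume (Set.univ : Set ℝ)) y := by
            intro y
            by_cases hy : g i y ≠ 0
            · have : {z | Function.update y i z ∈ {u | g i u ≠ 0}} = Set.univ := by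
                ext z; simp [hindep, hy]
              rw [this, Set.indicator_of_mem (by exact hy)]
            · have : {z | Function.update y i z ∈ {u | g i u ≠ 0}} = ∅ := by
                ext z; simp [hindep]; simpa using hy
              rw [this, Set.indicator_of_notMem hy]
              simp
          rw [lintegral_congr hpt, lintegral_indicator_const hE, hmnull, mul_zero]
    have hbad : chainLaw K (x₀, fun _ => false) n
        {p | K n p (B ×ˢ ({t'} : Set (Fin d → Bool))) ≠ 0} = 0 := by
      have hsub : {p | K n p (B ×ˢ ({t'} : Set (Fin d → Bool))) ≠ 0} ⊆
          ⋃ t, (S t) ×ˢ ({t} : Set (Fin d → Bool)) := by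
        intro p hp
        refine Set.mem_iUnion.mpr ⟨p.2, Set.mem_prod.mpr ⟨?_, rfl⟩⟩
        by_contra hx
        apply hp
        obtain ⟨x, t⟩ := p
        simp only at hx
        rw [hK n x t _ hS']
        apply Finset.sum_eq_zero
        intro i _
        have hM : (∫⁻ z, (B ×ˢ ({t'} : Set (Fin d → Bool))).indicator 1
            (Function.update x i z, Function.update t i true) *
            ENNReal.ofReal (q i x z * gibbsAlpha f q i x z)) = 0 := by
          by_cases h : Function.update t i true = t'
          · have hgx : g i x = 0 := by
              by_contra hg0
              exact hx (Or.inr (Set.mem_iUnion.mpr ⟨i, by rw [if_pos h]; exact hg0⟩))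
            have hae : ∀ᵐ z, B.indicator (1 : (Fin d → ℝ) → ℝ≥0∞)
                (Function.update x i z) = 0 := by
              refine (lintegral_eq_zero_iff ?_).mp hgx
              exact (measurable_const.indicator hB).comp (measurable_update x)
            rw [← lintegral_zero]
            apply lintegral_congr_ae
            filter_upwards [hae] with z hz
            have heq : (B ×ˢ ({t'} : Set (Fin d → Bool))).indicator
                (1 : (Fin d → ℝ) × (Fin d → Bool) → ℝ≥0∞)
                (Function.update x i z, Function.update t i true)
                = B.indicator 1 (Function.update x i z) := by
              simp [Set.indicator_apply, Set.mem_prod, h]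
            rw [heq, hz, zero_mul]
          · have hz : ∀ z, (B ×ˢ ({t'} : Set (Fin d → Bool))).indicator
                (1 : (Fin d → ℝ) × (Fin d → Bool) → ℝ≥0∞)
                (Function.update x i z, Function.update t i true) = 0 := by
              intro z
              apply Set.indicator_of_notMem
              rintro ⟨-, ht⟩
              exact h ht
            rw [← lintegral_zero]
            apply lintegral_congr
            intro z
            rw [hz z, zero_mul]
        have hR : (1 - moveMass f q i x Set.univ) *
            (B ×ˢ ({t'} : Set (Fin d → Bool))).indicator 1 (x, t) = 0 := by
          have : (B ×ˢ ({t'} : Set (Fin d → Bool))).indicator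
              (1 : (Fin d → ℝ) × (Fin d → Bool) → ℝ≥0∞) (x, t) = 0 := by
            apply Set.indicator_of_notMem
            rintro ⟨hxB, ht⟩
            rw [Set.mem_singleton_iff] at ht
            exact hx (Or.inl (by rw [if_pos ht]; exact hxB))
          rw [this, mul_zero]
        rw [hM, hR, add_zero, mul_zero]
      exact measure_mono_null hsub
        (measure_iUnion_null fun t => ih t (S t) (hSmeas t) (hSnull t))
    simp only [chainLaw]
    rw [Measure.bind_apply hS' (Kernel.measurable (K n)).aemeasurable]
    rw [lintegral_eq_zero_iff (Kernel.measurable_coe (K n) hS')]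
    exact ae_iff.mpr (by simpa using hbad)


/-- Corollary 11. Consider a Metropolis-within-Gibbs chain on
`X = {x | f x > 0} ⊆ ℝ^d` whose coordinate-selection scheme at time `n` chooses direction `i`
with probability `w n i` (covering random-scan and deterministic-scan). Track, alongside the
position, which coordinate directions have been moved in so far. If `A` is a Borel set of
Lebesgue measure `0`, then for every initial state `x₀` and every `n`,
`P[Xₙ ∈ A | X₀ = x₀] ≤ P[Dₙ]`, where `Dₙ` is the event that by time `n` the chain has not
yet moved at least once in each of the `d` coordinate directions. -/
theorem cor11_null_sets_dominated_by_Dn {d : ℕ}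
    (f : (Fin d → ℝ) → ℝ) (hf_meas : Measurable f) (hf_nonneg : ∀ x, 0 ≤ f x)
    (hopen : IsOpen {x | 0 < f x})
    (hf_int : ∫⁻ x, ENNReal.ofReal (f x) ≠ ∞)
    (q : Fin d → (Fin d → ℝ) → ℝ → ℝ)
    (hq_meas : ∀ i, Measurable (Function.uncurry (q i)))
    (hq_nonneg : ∀ i x z, 0 ≤ q i x z)
    (hq_int : ∀ i x, ∫⁻ z, ENNReal.ofReal (q i x z) = 1)
    (hsym : SymPositive q)
    (hQX : ∀ (i : Fin d) (x : Fin d → ℝ), 0 < f x →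
      0 < ∫⁻ z in {z | 0 < f (Function.update x i z)}, ENNReal.ofReal (q i x z))
    (w : ℕ → Fin d → ℝ≥0∞) (hw : ∀ n, ∑ i, w n i = 1)
    (K : ℕ → Kernel ((Fin d → ℝ) × (Fin d → Bool)) ((Fin d → ℝ) × (Fin d → Bool)))
    [∀ n, IsMarkovKernel (K n)]
    (hK : ∀ (n : ℕ) (x : Fin d → ℝ) (t : Fin d → Bool)
        (A : Set ((Fin d → ℝ) × (Fin d → Bool))), MeasurableSet A →
      K n (x, t) A = ∑ i, w n i *
        ((∫⁻ z, A.indicator 1 (Function.update x i z, Function.update t i true) *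
            ENNReal.ofReal (q i x z * gibbsAlpha f q i x z)) +
          (1 - moveMass f q i x Set.univ) * A.indicator 1 (x, t))) :
    ∀ A : Set (Fin d → ℝ), MeasurableSet A → volume A = 0 →
      ∀ x₀ : Fin d → ℝ, 0 < f x₀ → ∀ n : ℕ,
        chainLaw K (x₀, fun _ => false) n {p | p.1 ∈ A} ≤
          chainLaw K (x₀, fun _ => false) n {p | p.2 ≠ fun _ => true} := by
  intro A hA hA0 x₀ hfx₀ n
  have hnull : ∀ x : Fin d → ℝ, Measure.pi (Cor11Aux.mT (fun _ => true) x) A = 0 := by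
    intro x
    have hmt : Cor11Aux.mT (fun _ : Fin d => true) x = fun _ => (volume : Measure ℝ) := by
      funext j; simp [Cor11Aux.mT]
    rw [hmt, ← MeasureTheory.volume_pi]
    exact hA0
  have h1 : chainLaw K (x₀, fun _ => false) n
      (A ×ˢ ({fun _ => true} : Set (Fin d → Bool))) = 0 :=
    key_invariant f q w K hK x₀ n _ A hA hnull
  calc chainLaw K (x₀, fun _ => false) n {p | p.1 ∈ A}
      ≤ chainLaw K (x₀, fun _ => false) n
        ((A ×ˢ ({fun _ => true} : Set (Fin d → Bool))) ∪ {p | p.2 ≠ fun _ => true}) := by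
        apply measure_mono
        intro p hp
        by_cases h : p.2 = fun _ => true
        · exact Or.inl (Set.mem_prod.mpr ⟨hp, Set.mem_singleton_iff.mpr h⟩)
        · exact Or.inr h
    _ ≤ chainLaw K (x₀, fun _ => false) n (A ×ˢ ({fun _ => true} : Set (Fin d → Bool)))
        + chainLaw K (x₀, fun _ => false) n {p | p.2 ≠ fun _ => true} := measure_union_le _ _
    _ = chainLaw K (x₀, fun _ => false) n {p | p.2 ≠ fun _ => true} := by rw [h1, zero_add]
end
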